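/- arXiv:2105.08642 — 6 statements merged into one kernel-verified Lean document; each statement's English description precedes it below -/
import Mathlib

section
/- If T is a bounded linear operator between complex Hilbert spaces with trivial kernel, then A := sqrt(T* T) has dense range in H, and T is topologically equivalent to A, i.e. T = V ∘ A ∘ U for some isomorphisms (invertible bounded linear maps) U of H and V from H onto the closure of the range of T. -/
open ContinuousLinearMap Set

/-- If `T` is bounded linear between complex Hilbert spaces with trivial kernel, then
`A = sqrt (T* T)` has dense range, and `T` is topologically equivalent to `A` viewed as an
operator into the closure of the range of `T`: `T = V ∘ A ∘ U` for isomorphisms `U` of `H`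
and `V` from `H` onto the closure of the range of `T`. -/
theorem topologically_equivalent_of_injective
    {H H' : Type*} [NormedAddCommGroup H] [InnerProductSpace ℂ H] [CompleteSpace H]
    [NormedAddCommGroup H'] [InnerProductSpace ℂ H'] [CompleteSpace H']
    (T : H →L[ℂ] H') (A : H →L[ℂ] H)
    (hA : A.IsPositive)
    (hAA : A ∘L A = ContinuousLinearMap.adjoint T ∘L T)
    (hker : LinearMap.ker (T : H →ₗ[ℂ] H') = ⊥) :
    DenseRange A ∧
    ∃ (U : H ≃L[ℂ] H) (V : H ≃L[ℂ] ↥((LinearMap.range (T : H →ₗ[ℂ] H')).topologicalClosure)),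
      ∀ x : H, T x = (V (A (U x)) : H') := by
  have hTinj : Function.Injective T := LinearMap.ker_eq_bot.1 hker
  have hadj : ContinuousLinearMap.adjoint A = A := ContinuousLinearMap.isSelfAdjoint_iff'.1 hA.isSelfAdjoint
  -- key inner product identity
  have hinner : ∀ x : H, (inner ℂ (A x) (A x) : ℂ) = inner ℂ (T x) (T x) := by
    intro x
    have h1 : (inner ℂ (A x) (A x) : ℂ) = inner ℂ x (A (A x)) := by
      have h := ContinuousLinearMap.adjoint_inner_right A x (A x)
      rw [hadj] at h
      exact h.symm
    have h2 : A (A x) = ContinuousLinearMap.adjoint T (T x) := by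
      have := congrFun (congrArg DFunLike.coe hAA) x
      simpa using this
    rw [h1, h2, ContinuousLinearMap.adjoint_inner_right]
  -- norm identity
  have hnorm : ∀ x : H, ‖A x‖ = ‖T x‖ := by
    intro x
    have h := hinner x
    rw [inner_self_eq_norm_sq_to_K, inner_self_eq_norm_sq_to_K] at h
    have h' : (‖A x‖ : ℝ) ^ 2 = (‖T x‖ : ℝ) ^ 2 := by exact_mod_cast h
    rw [← Real.sqrt_sq (norm_nonneg (A x)), ← Real.sqrt_sq (norm_nonneg (T x)), h']
  -- injectivity of A
  have hAinj : Function.Injective A := by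
    intro x y h
    apply hTinj
    have : A (x - y) = 0 := by simp [map_sub, h]
    have h0 : ‖T (x - y)‖ = 0 := by rw [← hnorm, this, norm_zero]
    have : T (x - y) = 0 := norm_eq_zero.1 h0
    rw [map_sub, sub_eq_zero] at this
    exact this
  -- dense range of A
  have horth : (LinearMap.range (A : H →ₗ[ℂ] H))ᗮ = ⊥ := by
    rw [Submodule.eq_bot_iff]
    intro x hx
    apply hAinj
    rw [map_zero]
    rw [← inner_self_eq_zero (𝕜 := ℂ) (x := A x)]
    have := hx (A (A x)) ⟨A x, rfl⟩
    calc (inner ℂ (A x) (A x) : ℂ) = inner ℂ x (A (A x)) := by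
          have h := ContinuousLinearMap.adjoint_inner_right A x (A x)
          rw [hadj] at h
          exact h.symm
      _ = 0 := by rw [← inner_conj_symm, this, map_zero]
  have hdenseA : DenseRange A := by
    have htop : (LinearMap.range (A : H →ₗ[ℂ] H)).topologicalClosure = ⊤ :=
      Submodule.topologicalClosure_eq_top_iff.2 horth
    have : Dense ((LinearMap.range (A : H →ₗ[ℂ] H) : Submodule ℂ H) : Set H) :=
      Submodule.dense_iff_topologicalClosure_eq_top.2 htop
    simpa [DenseRange, LinearMap.coe_range] using this
  refine ⟨hdenseA, ?_⟩
  -- the linear equivalence H ≃ range T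
  set K := LinearMap.range (T : H →ₗ[ℂ] H') with hK
  set Kc := K.topologicalClosure with hKc
  have hclosed : IsClosed (Kc : Set H') := Submodule.isClosed_topologicalClosure _
  haveI : CompleteSpace Kc := hclosed.completeSpace_coe
  let eT : H ≃ₗ[ℂ] K := LinearEquiv.ofInjective (T : H →ₗ[ℂ] H') hTinj
  have heT : ∀ x : H, ((eT x : K) : H') = T x := fun x => rfl
  -- L : range T →ₗᵢ H, L (T x) = A x
  let L : K →ₗᵢ[ℂ] H :=
    { toLinearMap := (A : H →ₗ[ℂ] H) ∘ₗ (eT.symm : K →ₗ[ℂ] H)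
      norm_map' := by
        intro y
        simp only [LinearMap.coe_comp, Function.comp_apply, ContinuousLinearMap.coe_coe,
          LinearEquiv.coe_coe]
        rw [hnorm]
        have : T (eT.symm y) = (y : H') := by rw [← heT, eT.apply_symm_apply]
        rw [this]
        rfl }
  let Lc : K →L[ℂ] H := L.toContinuousLinearMap
  -- inclusion of K into its closure
  let inclI : K →ₗᵢ[ℂ] Kc :=
    { toLinearMap := Submodule.inclusion (Submodule.le_topologicalClosure K)
      norm_map' := fun x => rfl }
  let e : K →L[ℂ] Kc := inclI.toContinuousLinearMap
  have he_unif : IsUniformInducing e := inclI.isometry.isUniformInducing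
  have he_dense : DenseRange e := by
    intro z
    rw [closure_subtype]
    have hz : (z : H') ∈ closure (K : Set H') := by
      rw [← Submodule.topologicalClosure_coe]
      exact z.2
    refine closure_mono ?_ hz
    rintro w hw
    exact ⟨e ⟨w, hw⟩, ⟨⟨w, hw⟩, rfl⟩, rfl⟩
  -- extend
  let W : Kc →L[ℂ] H := Lc.extend e
  have hWe : ∀ y : K, W (e y) = L y := fun y => ContinuousLinearMap.extend_eq (f := Lc) (e := e) he_dense he_unif y
  have hWTx : ∀ x : H, W (e (eT x)) = A x := by
    intro x
    rw [hWe]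
    show A (eT.symm (eT x)) = A x
    rw [eT.symm_apply_apply]
  have hWnorm : ∀ z : Kc, ‖W z‖ = ‖z‖ := by
    intro z
    refine he_dense.induction_on z ?_ ?_
    · exact isClosed_eq (continuous_norm.comp W.continuous) continuous_norm
    · intro y
      rw [hWe, L.norm_map]
      exact (inclI.norm_map y).symm
  let Wiso : Kc →ₗᵢ[ℂ] H := { toLinearMap := (W : Kc →ₗ[ℂ] H), norm_map' := hWnorm }
  have hWsurj : Function.Surjective Wiso := by
    have hclosedW : IsClosed (Set.range (Wiso : Kc → H)) :=
      Wiso.isometry.isClosedEmbedding.isClosed_range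
    have hsub : Set.range A ⊆ Set.range (Wiso : Kc → H) := by
      rintro _ ⟨x, rfl⟩
      exact ⟨e (eT x), hWTx x⟩
    have : closure (Set.range A) ⊆ Set.range (Wiso : Kc → H) :=
      hclosedW.closure_subset_iff.2 hsub
    rw [hdenseA.closure_range] at this
    intro x
    exact this (Set.mem_univ x)
  let Weq : Kc ≃ₗᵢ[ℂ] H := LinearIsometryEquiv.ofSurjective Wiso hWsurj
  have hWeq : ∀ z : Kc, Weq z = W z := fun z => rfl
  refine ⟨ContinuousLinearEquiv.refl ℂ H, Weq.toContinuousLinearEquiv.symm, ?_⟩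
  intro x
  have hVAx : Weq.toContinuousLinearEquiv.symm (A ((ContinuousLinearEquiv.refl ℂ H) x))
      = e (eT x) := by
    rw [ContinuousLinearEquiv.symm_apply_eq]
    show A x = Weq (e (eT x))
    rw [hWeq, hWTx]
  rw [hVAx]
  rfl
end

section
/- Let A be a bounded positive semi-definite operator on a complex Hilbert space H with spectral measure E, and let I be an interval of the form [0,μ], [0,μ), (μ,∞) or [μ,∞) with complement I^c = [0,∞) \ I. Then the spectral subspace E(I)H is a maximal I-subspace for A: it is an I-subspace, and any strictly larger linear subspace contains a nonzero vector x with ‖A x‖/‖x‖ ∉ I. -/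
open MeasureTheory

/-- `E` is the projection-valued spectral measure of the bounded positive operator `A`
on a complex Hilbert space, with `μ x` the associated scalar Borel measures
`S ↦ ⟪x, E S x⟫`, so that `A = ∫ λ dE(λ)` (expressed through the quadratic forms
`⟪x, A x⟫ = ∫ λ dμ_x(λ)` and `‖A x‖² = ∫ λ² dμ_x(λ)`). -/
structure IsSpectralMeasureOf {H : Type*} [NormedAddCommGroup H] [InnerProductSpace ℂ H]
    [CompleteSpace H] (A : H →L[ℂ] H) (E : Set ℝ → (H →L[ℂ] H))
    (μ : H → Measure ℝ) : Prop where
  selfAdjoint : ∀ S : Set ℝ, IsSelfAdjoint (E S)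
  idem : ∀ S : Set ℝ, E S ∘L E S = E S
  inter : ∀ S S' : Set ℝ, MeasurableSet S → MeasurableSet S' →
    E S ∘L E S' = E (S ∩ S')
  empty : E ∅ = 0
  univ : E Set.univ = 1
  countablyAdditive : ∀ f : ℕ → Set ℝ, Pairwise (Function.onFun Disjoint f) →
    (∀ n, MeasurableSet (f n)) →
    ∀ x : H, HasSum (fun n => E (f n) x) (E (⋃ n, f n) x)
  suppNonneg : E (Set.Iio 0) = 0
  mu_eq : ∀ (x : H) (S : Set ℝ), MeasurableSet S →
    μ x S = ENNReal.ofReal (Complex.re (inner ℂ x (E S x)))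
  integral_id : ∀ x : H, Complex.re (inner ℂ x (A x)) = ∫ t, t ∂(μ x)
  integral_sq : ∀ x : H, ‖A x‖ ^ 2 = ∫ t, t ^ 2 ∂(μ x)

section helpers
variable {H : Type*} [NormedAddCommGroup H] [InnerProductSpace ℂ H] [CompleteSpace H]
  {A : H →L[ℂ] H} {E : Set ℝ → (H →L[ℂ] H)} {μmeas : H → Measure ℝ}

lemma spm_inner_E (hE : IsSpectralMeasureOf A E μmeas) (S : Set ℝ) (x z : H) :
    inner ℂ (E S x) z = inner ℂ x (E S z) := by
  conv_lhs => rw [← (hE.selfAdjoint S).adjoint_eq]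
  exact ContinuousLinearMap.adjoint_inner_left _ _ _

lemma spm_apply_inter (hE : IsSpectralMeasureOf A E μmeas) (S S' : Set ℝ)
    (hS : MeasurableSet S) (hS' : MeasurableSet S') (x : H) :
    E S (E S' x) = E (S ∩ S') x := by
  rw [← hE.inter S S' hS hS']; rfl

lemma spm_mu_univ (hE : IsSpectralMeasureOf A E μmeas) (x : H) :
    μmeas x Set.univ = ENNReal.ofReal (‖x‖ ^ 2) := by
  rw [hE.mu_eq x _ MeasurableSet.univ, hE.univ]
  have := inner_self_eq_norm_sq (𝕜 := ℂ) x
  simp only [RCLike.re_to_complex] at this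
  simp only [ContinuousLinearMap.one_apply, this]

lemma spm_finite (hE : IsSpectralMeasureOf A E μmeas) (x : H) :
    IsFiniteMeasure (μmeas x) :=
  ⟨by rw [spm_mu_univ hE x]; exact ENNReal.ofReal_lt_top⟩

lemma spm_mu_compl (hE : IsSpectralMeasureOf A E μmeas) {x : H} {S : Set ℝ}
    (hS : MeasurableSet S) (hx : E S x = x) : μmeas x Sᶜ = 0 := by
  have h : E Sᶜ x = 0 := by
    rw [← hx, spm_apply_inter hE _ _ hS.compl hS, Set.compl_inter_self, hE.empty]
    rfl
  rw [hE.mu_eq x _ hS.compl, h]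
  simp

lemma spm_mu_neg (hE : IsSpectralMeasureOf A E μmeas) (x : H) :
    μmeas x (Set.Iio 0) = 0 := by
  rw [hE.mu_eq x _ measurableSet_Iio, hE.suppNonneg]
  simp

lemma spm_ae_mem (hE : IsSpectralMeasureOf A E μmeas) {x : H} {S : Set ℝ}
    (hS : MeasurableSet S) (hx : E S x = x) :
    ∀ᵐ t ∂(μmeas x), t ∈ S ∩ Set.Ici 0 := by
  rw [ae_iff]
  have hset : {t : ℝ | ¬ t ∈ S ∩ Set.Ici 0} = Sᶜ ∪ Set.Iio 0 := by
    ext t; simp [not_and_or, not_le]; tauto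
  rw [hset]
  refine le_antisymm ?_ zero_le
  calc μmeas x (Sᶜ ∪ Set.Iio 0) ≤ μmeas x Sᶜ + μmeas x (Set.Iio 0) := measure_union_le _ _
    _ = 0 := by rw [spm_mu_compl hE hS hx, spm_mu_neg hE x]; simp

lemma spm_normE_le (hE : IsSpectralMeasureOf A E μmeas) (S : Set ℝ) (x : H) :
    ‖E S x‖ ≤ ‖x‖ := by
  have h1 : ‖E S x‖ ^ 2 = Complex.re (inner ℂ (E S x) (E S x)) := by
    have := inner_self_eq_norm_sq (𝕜 := ℂ) (E S x)
    simp only [RCLike.re_to_complex] at this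
    rw [this]
  have h2 : E S (E S x) = E S x := by
    rw [← ContinuousLinearMap.comp_apply, hE.idem]
  have h3 : Complex.re (inner ℂ (E S x) (E S x)) ≤ ‖x‖ * ‖E S x‖ := by
    calc Complex.re (inner ℂ (E S x) (E S x))
        = Complex.re (inner ℂ x (E S (E S x))) := by rw [spm_inner_E hE]
      _ = Complex.re (inner ℂ x (E S x)) := by rw [h2]
      _ ≤ ‖x‖ * ‖E S x‖ := by
          have := re_inner_le_norm (𝕜 := ℂ) x (E S x)
          simpa using this
  nlinarith [norm_nonneg (E S x), norm_nonneg x]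

lemma spm_restrict (hE : IsSpectralMeasureOf A E μmeas) (x : H) (n : ℕ) :
    μmeas (E (Set.Icc 0 (n:ℝ)) x) = (μmeas x).restrict (Set.Icc 0 (n:ℝ)) := by
  refine Measure.ext fun S hS => ?_
  rw [Measure.restrict_apply hS, hE.mu_eq _ S hS,
      hE.mu_eq x _ (hS.inter measurableSet_Icc)]
  have h1 : E S (E (Set.Icc 0 (n:ℝ)) x) = E (S ∩ Set.Icc 0 (n:ℝ)) x :=
    spm_apply_inter hE S _ hS measurableSet_Icc x
  rw [h1, spm_inner_E hE,
      spm_apply_inter hE _ _ measurableSet_Icc (hS.inter measurableSet_Icc),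
      Set.inter_eq_self_of_subset_right Set.inter_subset_right]

lemma spm_sq_integrable (hE : IsSpectralMeasureOf A E μmeas) (x : H) :
    Integrable (fun t => t ^ 2) (μmeas x) := by
  haveI := spm_finite hE x
  have hbound : ∀ n : ℕ, ∫⁻ t in Set.Icc (0:ℝ) (n:ℝ), ENNReal.ofReal (t ^ 2) ∂(μmeas x) ≤
      ENNReal.ofReal ((‖A‖ * ‖x‖) ^ 2) := by
    intro n
    have hres := spm_restrict hE x n
    have hint : Integrable (fun t => t ^ 2) ((μmeas x).restrict (Set.Icc 0 (n:ℝ))) := by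
      refine Integrable.mono' (integrable_const ((n:ℝ) ^ 2))
        ((continuous_pow 2).aestronglyMeasurable) ?_
      filter_upwards [ae_restrict_mem measurableSet_Icc] with t ht
      rw [Real.norm_eq_abs, abs_of_nonneg (sq_nonneg t)]
      nlinarith [ht.1, ht.2]
    rw [← ofReal_integral_eq_lintegral_ofReal hint (ae_of_all _ fun t => sq_nonneg t)]
    apply ENNReal.ofReal_le_ofReal
    have h1 : ∫ t, t ^ 2 ∂((μmeas x).restrict (Set.Icc 0 (n:ℝ))) =
        ‖A (E (Set.Icc 0 (n:ℝ)) x)‖ ^ 2 := by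
      rw [hE.integral_sq, hres]
    rw [h1]
    have h2 : ‖A (E (Set.Icc 0 (n:ℝ)) x)‖ ≤ ‖A‖ * ‖x‖ :=
      le_trans (A.le_opNorm _)
        (mul_le_mul_of_nonneg_left (spm_normE_le hE _ x) (norm_nonneg A))
    nlinarith [norm_nonneg (A (E (Set.Icc 0 (n:ℝ)) x)), norm_nonneg A, norm_nonneg x]
  have hmeas : ∀ n : ℕ,
      Measurable ((Set.Icc (0:ℝ) (n:ℝ)).indicator fun t => ENNReal.ofReal (t ^ 2)) :=
    fun n => (ENNReal.measurable_ofReal.comp ((continuous_pow 2).measurable)).indicator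
      measurableSet_Icc
  have hmono : Monotone (fun (n : ℕ) =>
      (Set.Icc (0:ℝ) (n:ℝ)).indicator fun t => ENNReal.ofReal (t ^ 2)) := by
    intro m n hmn t
    exact Set.indicator_le_indicator_of_subset
      (Set.Icc_subset_Icc_right (by exact_mod_cast hmn)) (fun _ => zero_le) t
  have hae : ∀ᵐ t ∂(μmeas x), ENNReal.ofReal (t ^ 2) =
      ⨆ n : ℕ, (Set.Icc (0:ℝ) (n:ℝ)).indicator (fun t => ENNReal.ofReal (t ^ 2)) t := by
    have h0 : ∀ᵐ t ∂(μmeas x), 0 ≤ t := by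
      rw [ae_iff]
      have hset : {t : ℝ | ¬ 0 ≤ t} = Set.Iio 0 := by ext t; simp [not_le]
      rw [hset]; exact spm_mu_neg hE x
    filter_upwards [h0] with t ht
    refine le_antisymm ?_ (iSup_le fun n => ?_)
    · refine le_iSup_of_le ⌈t⌉₊ ?_
      rw [Set.indicator_of_mem (Set.mem_Icc.mpr ⟨ht, Nat.le_ceil t⟩)]
    · exact Set.indicator_le_self' (fun _ _ => zero_le) t
  have hfin : ∫⁻ t, ENNReal.ofReal (t ^ 2) ∂(μmeas x) < ⊤ := by
    calc ∫⁻ t, ENNReal.ofReal (t ^ 2) ∂(μmeas x)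
        = ∫⁻ t, ⨆ n : ℕ, (Set.Icc (0:ℝ) (n:ℝ)).indicator
            (fun t => ENNReal.ofReal (t ^ 2)) t ∂(μmeas x) := lintegral_congr_ae hae
      _ = ⨆ n : ℕ, ∫⁻ t, (Set.Icc (0:ℝ) (n:ℝ)).indicator
            (fun t => ENNReal.ofReal (t ^ 2)) t ∂(μmeas x) := lintegral_iSup hmeas hmono
      _ = ⨆ n : ℕ, ∫⁻ t in Set.Icc (0:ℝ) (n:ℝ), ENNReal.ofReal (t ^ 2) ∂(μmeas x) :=
            iSup_congr fun n => lintegral_indicator measurableSet_Icc _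
      _ ≤ ENNReal.ofReal ((‖A‖ * ‖x‖) ^ 2) := iSup_le hbound
      _ < ⊤ := ENNReal.ofReal_lt_top
  refine ⟨(continuous_pow 2).aestronglyMeasurable, ?_⟩
  have heq : ∀ t : ℝ, (‖t ^ 2‖₊ : ENNReal) = ENNReal.ofReal (t ^ 2) := fun t => by
    rw [← enorm_eq_nnnorm, ← ofReal_norm, Real.norm_eq_abs, abs_of_nonneg (sq_nonneg t)]
  show ∫⁻ t, (‖t ^ 2‖₊ : ENNReal) ∂(μmeas x) < ⊤
  rw [lintegral_congr heq]
  exact hfin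

lemma spm_const_integral (hE : IsSpectralMeasureOf A E μmeas) (x : H) (c : ℝ) :
    ∫ _, c ∂(μmeas x) = c * ‖x‖ ^ 2 := by
  rw [integral_const, measureReal_def, spm_mu_univ hE x, ENNReal.toReal_ofReal (sq_nonneg _), smul_eq_mul]
  ring

lemma spm_univ_ne_zero (hE : IsSpectralMeasureOf A E μmeas) {x : H} (hx0 : x ≠ 0) :
    μmeas x Set.univ ≠ 0 := by
  rw [spm_mu_univ hE x]
  have : 0 < ‖x‖ := norm_pos_iff.mpr hx0
  simp only [ne_eq, ENNReal.ofReal_eq_zero, not_le]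
  positivity

lemma spm_ratio_le (hE : IsSpectralMeasureOf A E μmeas) {x : H} {S : Set ℝ} {c : ℝ}
    (hS : MeasurableSet S) (hx : E S x = x) (hx0 : x ≠ 0) (hc : 0 ≤ c)
    (hb : ∀ t ∈ S ∩ Set.Ici 0, t ^ 2 ≤ c ^ 2) : ‖A x‖ / ‖x‖ ≤ c := by
  haveI := spm_finite hE x
  have hxpos : 0 < ‖x‖ := norm_pos_iff.mpr hx0
  have hint := spm_sq_integrable hE x
  have h1 : ∫ t, t ^ 2 ∂(μmeas x) ≤ c ^ 2 * ‖x‖ ^ 2 := by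
    rw [← spm_const_integral hE x (c ^ 2)]
    exact integral_mono_ae hint (integrable_const _)
      ((spm_ae_mem hE hS hx).mono fun t ht => hb t ht)
  have h2 : ‖A x‖ ^ 2 ≤ (c * ‖x‖) ^ 2 := by rw [hE.integral_sq x]; nlinarith
  have h3 : ‖A x‖ ≤ c * ‖x‖ := by nlinarith [norm_nonneg (A x), mul_nonneg hc hxpos.le]
  rw [div_le_iff₀ hxpos]; exact h3

lemma spm_le_ratio (hE : IsSpectralMeasureOf A E μmeas) {x : H} {S : Set ℝ} {c : ℝ}
    (hS : MeasurableSet S) (hx : E S x = x) (hx0 : x ≠ 0) (hc : 0 ≤ c)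
    (hb : ∀ t ∈ S ∩ Set.Ici 0, c ^ 2 ≤ t ^ 2) : c ≤ ‖A x‖ / ‖x‖ := by
  haveI := spm_finite hE x
  have hxpos : 0 < ‖x‖ := norm_pos_iff.mpr hx0
  have hint := spm_sq_integrable hE x
  have h1 : c ^ 2 * ‖x‖ ^ 2 ≤ ∫ t, t ^ 2 ∂(μmeas x) := by
    rw [← spm_const_integral hE x (c ^ 2)]
    exact integral_mono_ae (integrable_const _) hint
      ((spm_ae_mem hE hS hx).mono fun t ht => hb t ht)
  have h2 : (c * ‖x‖) ^ 2 ≤ ‖A x‖ ^ 2 := by rw [hE.integral_sq x]; nlinarith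
  have h3 : c * ‖x‖ ≤ ‖A x‖ := by nlinarith [norm_nonneg (A x), mul_nonneg hc hxpos.le]
  rw [le_div_iff₀ hxpos]; exact h3

lemma spm_integral_pos (hE : IsSpectralMeasureOf A E μmeas) {x : H} {f : ℝ → ℝ}
    (hx0 : x ≠ 0) (hf_int : Integrable f (μmeas x))
    (hpos : ∀ᵐ t ∂(μmeas x), 0 < f t) : 0 < ∫ t, f t ∂(μmeas x) := by
  have hnn : 0 ≤ᶠ[ae (μmeas x)] f := hpos.mono fun t ht => ht.le
  have hge : 0 ≤ ∫ t, f t ∂(μmeas x) := integral_nonneg_of_ae hnn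
  rcases hge.lt_or_eq with h | h
  · exact h
  · exfalso
    have hzero : f =ᶠ[ae (μmeas x)] 0 :=
      (integral_eq_zero_iff_of_nonneg_ae hnn hf_int).mp h.symm
    have hfalse : ∀ᵐ t ∂(μmeas x), False := by
      filter_upwards [hpos, hzero] with t h1 h2
      rw [Pi.zero_apply] at h2
      exact lt_irrefl 0 (h2 ▸ h1)
    rw [ae_iff] at hfalse
    simp only [not_false_eq_true, Set.setOf_true] at hfalse
    exact spm_univ_ne_zero hE hx0 hfalse

lemma spm_ratio_lt (hE : IsSpectralMeasureOf A E μmeas) {x : H} {S : Set ℝ} {c : ℝ}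
    (hS : MeasurableSet S) (hx : E S x = x) (hx0 : x ≠ 0) (hc : 0 ≤ c)
    (hb : ∀ t ∈ S ∩ Set.Ici 0, t ^ 2 < c ^ 2) : ‖A x‖ / ‖x‖ < c := by
  haveI := spm_finite hE x
  have hxpos : 0 < ‖x‖ := norm_pos_iff.mpr hx0
  have hint := spm_sq_integrable hE x
  have hf_int : Integrable (fun t => c ^ 2 - t ^ 2) (μmeas x) := (integrable_const _).sub hint
  have hpos : ∀ᵐ t ∂(μmeas x), 0 < c ^ 2 - t ^ 2 :=
    (spm_ae_mem hE hS hx).mono fun t ht => sub_pos.mpr (hb t ht)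
  have h0 := spm_integral_pos hE hx0 hf_int hpos
  rw [integral_sub (integrable_const _) hint, spm_const_integral hE x (c ^ 2)] at h0
  have h2 : ‖A x‖ ^ 2 < (c * ‖x‖) ^ 2 := by rw [hE.integral_sq x]; nlinarith
  have h3 : ‖A x‖ < c * ‖x‖ := by nlinarith [norm_nonneg (A x), mul_nonneg hc hxpos.le]
  rw [div_lt_iff₀ hxpos]; exact h3

lemma spm_lt_ratio (hE : IsSpectralMeasureOf A E μmeas) {x : H} {S : Set ℝ} {c : ℝ}
    (hS : MeasurableSet S) (hx : E S x = x) (hx0 : x ≠ 0) (hc : 0 ≤ c)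
    (hb : ∀ t ∈ S ∩ Set.Ici 0, c ^ 2 < t ^ 2) : c < ‖A x‖ / ‖x‖ := by
  haveI := spm_finite hE x
  have hxpos : 0 < ‖x‖ := norm_pos_iff.mpr hx0
  have hint := spm_sq_integrable hE x
  have hf_int : Integrable (fun t => t ^ 2 - c ^ 2) (μmeas x) := hint.sub (integrable_const _)
  have hpos : ∀ᵐ t ∂(μmeas x), 0 < t ^ 2 - c ^ 2 :=
    (spm_ae_mem hE hS hx).mono fun t ht => sub_pos.mpr (hb t ht)
  have h0 := spm_integral_pos hE hx0 hf_int hpos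
  rw [integral_sub hint (integrable_const _), spm_const_integral hE x (c ^ 2)] at h0
  have h2 : (c * ‖x‖) ^ 2 < ‖A x‖ ^ 2 := by rw [hE.integral_sq x]; nlinarith
  have h3 : c * ‖x‖ < ‖A x‖ := by nlinarith [norm_nonneg (A x), mul_nonneg hc hxpos.le]
  rw [lt_div_iff₀ hxpos]; exact h3

lemma spm_add_compl (hE : IsSpectralMeasureOf A E μmeas) {S : Set ℝ}
    (hS : MeasurableSet S) (y : H) : E S y + E Sᶜ y = y := by
  classical
  set f : ℕ → Set ℝ := fun n => if n = 0 then S else if n = 1 then Sᶜ else ∅ with hf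
  have hdisj : Pairwise (Function.onFun Disjoint f) := by
    intro m n hmn
    simp only [Function.onFun, hf]
    split_ifs with h1 h2 h3 h4 h5 h6 h7 h8 <;>
      first
        | exact absurd (by omega : m = n) hmn
        | exact disjoint_compl_right
        | exact disjoint_compl_left
        | exact Set.disjoint_empty _
        | exact (Set.empty_disjoint _)
  have hmeas : ∀ n, MeasurableSet (f n) := by
    intro n
    simp only [hf]
    split_ifs
    · exact hS
    · exact hS.compl
    · exact MeasurableSet.empty
  have hUnion : (⋃ n, f n) = Set.univ := by
    apply Set.eq_univ_of_forall
    intro t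
    by_cases ht : t ∈ S
    · exact Set.mem_iUnion.mpr ⟨0, by simp [hf, ht]⟩
    · exact Set.mem_iUnion.mpr ⟨1, by simp [hf, ht]⟩
  have hsum := hE.countablyAdditive f hdisj hmeas y
  rw [hUnion, hE.univ] at hsum
  have h2 : HasSum (fun n => E (f n) y) (E S y + E Sᶜ y) := by
    have hzero : ∀ n ∉ ({0, 1} : Finset ℕ), E (f n) y = 0 := by
      intro n hn
      simp only [Finset.mem_insert, Finset.mem_singleton, not_or] at hn
      simp [hf, hn.1, hn.2, hE.empty]
    have : HasSum (fun n => E (f n) y) (∑ n ∈ ({0, 1} : Finset ℕ), E (f n) y) :=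
        hasSum_sum_of_ne_finset_zero hzero
    have hsum_eq : ∑ n ∈ ({0, 1} : Finset ℕ), E (f n) y = E S y + E Sᶜ y := by
      rw [Finset.sum_pair (by norm_num)]
      simp [hf]
    rwa [hsum_eq] at this
  exact h2.unique hsum

end helpers

/-- For a bounded positive operator `A` with spectral measure `E` and an interval `I` of
the form `[0,μ]`, `[0,μ)`, `(μ,∞)` or `[μ,∞)`, the spectral subspace `E(I)H` is a maximal
`I`-subspace for `A`: it is an `I`-subspace, and any strictly larger linear subspace
contains a nonzero vector `x` with `‖A x‖ / ‖x‖ ∉ I`. -/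
theorem spectral_subspace_maximal_isISubspace
    {H : Type*} [NormedAddCommGroup H] [InnerProductSpace ℂ H] [CompleteSpace H]
    (A : H →L[ℂ] H) (hA : A.IsPositive)
    (E : Set ℝ → (H →L[ℂ] H)) (μmeas : H → Measure ℝ)
    (hE : IsSpectralMeasureOf A E μmeas)
    (I : Set ℝ)
    (hI : ∃ μ : ℝ, 0 ≤ μ ∧
      (I = Set.Icc 0 μ ∨ I = Set.Ico 0 μ ∨ I = Set.Ioi μ ∨ I = Set.Ici μ)) :
    (∀ x ∈ LinearMap.range (E I : H →ₗ[ℂ] H), x ≠ 0 → ‖A x‖ / ‖x‖ ∈ I) ∧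
    (∀ Y : Submodule ℂ H, LinearMap.range (E I : H →ₗ[ℂ] H) < Y →
      ∃ x ∈ Y, x ≠ 0 ∧ ‖A x‖ / ‖x‖ ∉ I) := by
  obtain ⟨μ, hμ, hcase⟩ := hI
  have hImeas : MeasurableSet I := by
    rcases hcase with h | h | h | h <;> subst h
    · exact measurableSet_Icc
    · exact measurableSet_Ico
    · exact measurableSet_Ioi
    · exact measurableSet_Ici
  constructor
  · intro x hxr hx0
    obtain ⟨y, hy⟩ := hxr
    have hx : E I x = x := by
      rw [← hy]; change E I (E I y) = E I y; rw [← ContinuousLinearMap.comp_apply, hE.idem]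
    have hnn : 0 ≤ ‖A x‖ / ‖x‖ := div_nonneg (norm_nonneg _) (norm_nonneg _)
    rcases hcase with h | h | h | h <;> subst h
    · refine ⟨hnn, spm_ratio_le hE hImeas hx hx0 hμ fun t ht => ?_⟩
      obtain ⟨⟨h1, h2⟩, h3⟩ := ht
      nlinarith
    · refine ⟨hnn, spm_ratio_lt hE hImeas hx hx0 hμ fun t ht => ?_⟩
      obtain ⟨⟨h1, h2⟩, h3⟩ := ht
      nlinarith
    · refine Set.mem_Ioi.mpr (spm_lt_ratio hE hImeas hx hx0 hμ fun t ht => ?_)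
      obtain ⟨h1, h3⟩ := ht
      rw [Set.mem_Ioi] at h1
      have h3' : (0:ℝ) ≤ t := h3
      nlinarith
    · refine Set.mem_Ici.mpr (spm_le_ratio hE hImeas hx hx0 hμ fun t ht => ?_)
      obtain ⟨h1, h3⟩ := ht
      rw [Set.mem_Ici] at h1
      nlinarith
  · intro Y hY
    obtain ⟨y, hyY, hyR⟩ := SetLike.exists_of_lt hY
    set x := E Iᶜ y with hxdef
    have hsum : E I y + x = y := spm_add_compl hE hImeas y
    have hxY : x ∈ Y := by
      have h1 : E I y ∈ Y := hY.le (LinearMap.mem_range.mpr ⟨y, rfl⟩)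
      have h2 : x = y - E I y := eq_sub_of_add_eq' hsum
      rw [h2]; exact Y.sub_mem hyY h1
    have hx0 : x ≠ 0 := by
      intro h
      apply hyR
      refine LinearMap.mem_range.mpr ⟨y, ?_⟩
      rw [h, add_zero] at hsum
      exact hsum
    have hxfix : E Iᶜ x = x := by
      rw [hxdef, ← ContinuousLinearMap.comp_apply, hE.idem]
    refine ⟨x, hxY, hx0, ?_⟩
    rcases hcase with h | h | h | h <;> subst h
    · have hlt := spm_lt_ratio hE hImeas.compl hxfix hx0 hμ (fun t ht => by
        obtain ⟨h1, h3⟩ := ht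
        have h3' : (0:ℝ) ≤ t := h3
        simp only [Set.mem_compl_iff, Set.mem_Icc, not_and, not_le] at h1
        have := h1 h3'
        nlinarith)
      exact fun hmem => absurd hmem.2 (not_le.mpr hlt)
    · have hle := spm_le_ratio hE hImeas.compl hxfix hx0 hμ (fun t ht => by
        obtain ⟨h1, h3⟩ := ht
        have h3' : (0:ℝ) ≤ t := h3
        simp only [Set.mem_compl_iff, Set.mem_Ico, not_and, not_lt] at h1
        have := h1 h3'
        nlinarith)
      exact fun hmem => absurd hmem.2 (not_lt.mpr hle)
    · have hle := spm_ratio_le hE hImeas.compl hxfix hx0 hμ (fun t ht => by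
        obtain ⟨h1, h3⟩ := ht
        have h3' : (0:ℝ) ≤ t := h3
        simp only [Set.mem_compl_iff, Set.mem_Ioi, not_lt] at h1
        nlinarith)
      exact fun hmem => absurd (Set.mem_Ioi.mp hmem) (not_lt.mpr hle)
    · have hlt := spm_ratio_lt hE hImeas.compl hxfix hx0 hμ (fun t ht => by
        obtain ⟨h1, h3⟩ := ht
        have h3' : (0:ℝ) ≤ t := h3
        simp only [Set.mem_compl_iff, Set.mem_Ici, not_le] at h1
        nlinarith)
      exact fun hmem => absurd (Set.mem_Ici.mp hmem) (not_le.mpr hlt)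
end

section
/- If L : H → H' is an injective bounded linear operator between Hilbert spaces, then the Hilbert dimension of H is at most the Hilbert dimension of H' (as cardinals). -/
open scoped ComplexConjugate
open Cardinal

/-- If `L : H → H'` is an injective bounded linear operator between Hilbert spaces, then
the Hilbert dimension of `H` (the cardinality of any Hilbert/orthonormal basis) is at most
the Hilbert dimension of `H'`. -/
theorem hilbert_dim_le_of_injective
    {H : Type u} {H' : Type v}
    [NormedAddCommGroup H] [InnerProductSpace ℂ H] [CompleteSpace H]
    [NormedAddCommGroup H'] [InnerProductSpace ℂ H'] [CompleteSpace H']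
    (L : H →L[ℂ] H') (hL : Function.Injective L)
    {ι : Type u} {ι' : Type v}
    (b : HilbertBasis ι ℂ H) (b' : HilbertBasis ι' ℂ H') :
    Cardinal.lift.{v} (Cardinal.mk ι) ≤ Cardinal.lift.{u} (Cardinal.mk ι') := by
  classical
  by_cases hfin : Finite ι'
  · -- finite-dimensional case: use linear ranks
    haveI : Fintype ι' := Fintype.ofFinite ι'
    haveI : FiniteDimensional ℂ H' := Module.Finite.of_basis
      (b'.toOrthonormalBasis.toBasis)
    have h1 : Cardinal.lift.{v} (Cardinal.mk ι) ≤ Cardinal.lift.{v} (Module.rank ℂ H) := by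
      exact Cardinal.lift_le.mpr (b.orthonormal.linearIndependent.cardinal_le_rank)
    have h2 : Cardinal.lift.{v} (Module.rank ℂ H) ≤ Cardinal.lift.{u} (Module.rank ℂ H') :=
      LinearMap.lift_rank_le_of_injective (L : H →ₗ[ℂ] H') hL
    have h3 : Module.rank ℂ H' = Cardinal.mk ι' :=
      (b'.toOrthonormalBasis.toBasis.mk_eq_rank'').symm
    exact h1.trans (h2.trans_eq (by rw [h3]))
  · -- infinite case
    have hinf : Cardinal.aleph0 ≤ Cardinal.mk ι' := by
      rw [Cardinal.aleph0_le_mk_iff]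
      exact not_finite_iff_infinite.mp hfin
    -- for each i, pick j with ⟪b' j, L (b i)⟫ ≠ 0
    have hcover : ∀ i : ι, ∃ j : ι', inner ℂ (b' j) (L (b i)) ≠ (0 : ℂ) := by
      intro i
      by_contra hcon
      push_neg at hcon
      have hbi : b i ≠ 0 := b.orthonormal.ne_zero i
      have hLbi : L (b i) ≠ 0 := fun h => hbi (hL (by simpa using h))
      apply hLbi
      have : b'.repr (L (b i)) = 0 := by
        ext j
        simpa [b'.repr_apply_apply] using hcon j
      have := congrArg b'.repr.symm this
      simpa using this
    -- the sets {i | ⟪b' j, L (b i)⟫ ≠ 0} are countable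
    set A : H' →L[ℂ] H := ContinuousLinearMap.adjoint L with hA
    have hcnt : ∀ j : ι', Set.Countable {i : ι | inner ℂ (b' j) (L (b i)) ≠ (0 : ℂ)} := by
      intro j
      have hsum : Summable fun i : ι =>
          inner ℂ (A (b' j)) (b i) * inner ℂ (b i) (A (b' j)) :=
        b.summable_inner_mul_inner (A (b' j)) (A (b' j))
      apply hsum.countable_support.mono
      intro i hi
      simp only [Set.mem_setOf_eq] at hi
      have h1 : inner ℂ (A (b' j)) (b i) ≠ (0 : ℂ) := by
        rwa [hA, ContinuousLinearMap.adjoint_inner_left]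
      have h2 : inner ℂ (b i) (A (b' j)) ≠ (0 : ℂ) := fun h => h1 (by
        rw [← inner_conj_symm, h, map_zero])
      exact mul_ne_zero h1 h2
    choose f hf using hcover
    have hfiber : ∀ j : ι', Cardinal.lift.{v} (Cardinal.mk (f ⁻¹' {j})) ≤ Cardinal.aleph0 := by
      intro j
      have hc : Set.Countable (f ⁻¹' {j}) := by
        apply (hcnt j).mono
        intro i hi
        simp only [Set.mem_preimage, Set.mem_singleton_iff] at hi
        simp only [Set.mem_setOf_eq, ← hi]
        exact hf i
      haveI := hc.to_subtype
      rw [Cardinal.lift_le_aleph0]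
      exact Cardinal.mk_le_aleph0
    have hmain := Cardinal.lift_mk_le_lift_mk_mul_of_lift_mk_preimage_le f hfiber
    refine hmain.trans ?_
    rw [Cardinal.mul_aleph0_eq]
    rwa [Cardinal.aleph0_le_lift]
end

section
/- Let M be a cardinal-number-valued σ-additive Borel measure on [0,∞) and K a σ-compact subset with M(K) finite. Then there is a finite set F ⊆ K, consisting exactly of the points x with M({x}) > 0, such that M(K \ F) = 0; in particular M(K) = Σ_{x∈F} M({x}). -/
/-- A σ-additive, monotone, cardinal-number-valued measure on the Borel subsets of `ℝ`. -/
structure CardinalBorelMeasure where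
  m : Set ℝ → Cardinal.{0}
  empty : m ∅ = 0
  mono : ∀ ⦃S S' : Set ℝ⦄, MeasurableSet S → MeasurableSet S' → S ⊆ S' → m S ≤ m S'
  sigma_additive : ∀ f : ℕ → Set ℝ, Pairwise (Function.onFun Disjoint f) →
    (∀ n, MeasurableSet (f n)) → m (⋃ n, f n) = Cardinal.sum fun n => m (f n)

open Set

namespace CardinalBorelMeasure

lemma sum_eventually_zero (f : ℕ → Cardinal.{0}) (N : ℕ) (h : ∀ n, N ≤ n → f n = 0) :
    Cardinal.sum f = ∑ n ∈ Finset.range N, f n := by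
  induction N generalizing f with
  | zero =>
    have hf : f = fun _ => 0 := funext fun n => h n (Nat.zero_le n)
    rw [hf, Cardinal.sum_const']
    simp
  | succ N ih =>
    rw [Cardinal.sum_nat_eq_add_sum_succ,
      ih (fun n => f (n + 1)) (fun n hn => h _ (by omega)), Finset.sum_range_succ']
    exact (add_comm _ _)

variable (M : CardinalBorelMeasure)

lemma m_union {A B : Set ℝ} (hA : MeasurableSet A) (hB : MeasurableSet B)
    (hd : Disjoint A B) : M.m (A ∪ B) = M.m A + M.m B := by
  classical
  set f : ℕ → Set ℝ := fun n => if n = 0 then A else if n = 1 then B else ∅ with hf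
  have hU : (⋃ n, f n) = A ∪ B := by
    apply subset_antisymm
    · refine iUnion_subset fun n => ?_
      by_cases h0 : n = 0
      · simp [hf, h0]
      by_cases h1 : n = 1 <;> simp [hf, h0, h1]
    · refine union_subset ?_ ?_
      · exact subset_iUnion_of_subset 0 (by simp [hf])
      · exact subset_iUnion_of_subset 1 (by simp [hf])
  have hpd : Pairwise (Function.onFun Disjoint f) := by
    intro i j hij
    unfold Function.onFun
    rcases Nat.eq_zero_or_pos i with hi | hi
    · subst hi
      rcases Nat.eq_zero_or_pos j with hj | hj
      · omega
      · by_cases hj1 : j = 1 <;> simp [hf, hj1, Nat.pos_iff_ne_zero.mp hj, hd]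
    · rcases Nat.eq_zero_or_pos j with hj | hj
      · subst hj
        by_cases hi1 : i = 1 <;> simp [hf, hi1, Nat.pos_iff_ne_zero.mp hi, hd.symm]
      · by_cases hi1 : i = 1
        · by_cases hj1 : j = 1
          · omega
          · simp [hf, hi1, hj1, Nat.pos_iff_ne_zero.mp hj]
        · simp [hf, hi1, Nat.pos_iff_ne_zero.mp hi]
  have hmeas : ∀ n, MeasurableSet (f n) := by
    intro n
    by_cases h0 : n = 0
    · simpa [hf, h0] using hA
    by_cases h1 : n = 1
    · simpa [hf, h0, h1] using hB
    · simp [hf, h0, h1]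
  have := M.sigma_additive f hpd hmeas
  rw [hU] at this
  rw [this, sum_eventually_zero _ 2 (fun n hn => by
    have h0 : n ≠ 0 := by omega
    have h1 : n ≠ 1 := by omega
    simp [hf, h0, h1, M.empty])]
  simp [hf, Finset.sum_range_succ]

lemma m_union_le {A B : Set ℝ} (hA : MeasurableSet A) (hB : MeasurableSet B) :
    M.m (A ∪ B) ≤ M.m A + M.m B := by
  rw [← union_diff_self, M.m_union hA (hB.diff hA) disjoint_sdiff_right]
  exact add_le_add le_rfl (M.mono (hB.diff hA) hB diff_subset)

lemma m_biUnion {ι : Type} (B : ι → Set ℝ) (hm : ∀ i, MeasurableSet (B i)) :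
    ∀ s : Finset ι, (Set.Pairwise ↑s (Function.onFun Disjoint B)) →
      M.m (⋃ i ∈ s, B i) = ∑ i ∈ s, M.m (B i) := by
  classical
  intro s
  induction s using Finset.induction_on with
  | empty => intro _; simp [M.empty]
  | @insert a s ha ih =>
    intro hd
    rw [Finset.set_biUnion_insert, Finset.sum_insert ha]
    have hmeas : MeasurableSet (⋃ i ∈ s, B i) :=
      s.measurableSet_biUnion (fun i _ => hm i)
    have hdis : Disjoint (B a) (⋃ i ∈ s, B i) := by
      simp only [disjoint_iUnion_right]
      intro i hi
      exact hd (Finset.mem_insert_self a s) (Finset.mem_insert_of_mem hi)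
        (by rintro rfl; exact ha hi)
    rw [M.m_union (hm a) hmeas hdis,
      ih (hd.mono (Finset.coe_subset.mpr (Finset.subset_insert a s)))]

lemma m_finset (s : Finset ℝ) : M.m ↑s = ∑ x ∈ s, M.m {x} := by
  have h := M.m_biUnion (fun x : ℝ => {x}) (fun x => measurableSet_singleton x) s
    (fun x _ y _ hxy => by simpa [Function.onFun] using hxy)
  rw [← h]
  congr 1
  ext x
  simp

lemma card_le (s : Finset ℝ) (T : Set ℝ) (hT : MeasurableSet T) (hsub : ↑s ⊆ T)
    (hpos : ∀ x ∈ s, 0 < M.m {x}) : (s.card : Cardinal) ≤ M.m T := by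
  calc (s.card : Cardinal) = ∑ _x ∈ s, (1 : Cardinal) := by simp
    _ ≤ ∑ x ∈ s, M.m {x} :=
        Finset.sum_le_sum fun x hx => Cardinal.one_le_iff_pos.2 (hpos x hx)
    _ = M.m ↑s := (M.m_finset s).symm
    _ ≤ M.m T := M.mono s.finite_toSet.measurableSet hT hsub

lemma m_iUnion_null (B : ℕ → Set ℝ) (hm : ∀ n, MeasurableSet (B n))
    (h0 : ∀ n, M.m (B n) = 0) : M.m (⋃ n, B n) = 0 := by
  rw [← iUnion_disjointed, M.sigma_additive _ (disjoint_disjointed B)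
    (MeasurableSet.disjointed hm)]
  have hz : (fun n => M.m (disjointed B n)) = fun _ => (0 : Cardinal) := by
    funext n
    exact le_antisymm (h0 n ▸ M.mono (MeasurableSet.disjointed hm n) (hm n)
      (disjointed_subset B n)) (zero_le)
  rw [hz, Cardinal.sum_const']
  simp

lemma one_le_m_iInter (D : ℕ → Set ℝ) (hm : ∀ n, MeasurableSet (D n))
    (hanti : ∀ n, D (n + 1) ⊆ D n) (hfin : M.m (D 0) < Cardinal.aleph0)
    (h1 : ∀ n, 1 ≤ M.m (D n)) : 1 ≤ M.m (⋂ n, D n) := by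
  classical
  have hA : Antitone D := antitone_nat_of_succ_le hanti
  set E : ℕ → Set ℝ := fun n => D n \ D (n + 1) with hE
  have hEm : ∀ n, MeasurableSet (E n) := fun n => (hm n).diff (hm (n + 1))
  have hEd : Pairwise (Function.onFun Disjoint E) := by
    have key : ∀ i j, i < j → Disjoint (E i) (E j) := by
      intro i j hij
      apply Set.disjoint_left.mpr
      intro x hxi hxj
      exact hxi.2 (hA (by omega : i + 1 ≤ j) hxj.1)
    intro i j hij
    rcases lt_or_gt_of_ne hij with h | h
    · exact key i j h
    · exact (key j i h).symm
  -- finiteness of support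
  have hSfin : {n | M.m (E n) ≠ 0}.Finite := by
    by_contra hinf
    have hinf' : {n | M.m (E n) ≠ 0}.Infinite := hinf
    have : Cardinal.aleph0 ≤ M.m (D 0) := by
      rw [Cardinal.aleph0_le]
      intro k
      obtain ⟨t, hts, htc⟩ := hinf'.exists_subset_card_eq k
      have hsum : M.m (⋃ n ∈ t, E n) = ∑ n ∈ t, M.m (E n) :=
        M.m_biUnion E hEm t (fun i _ j _ hij => hEd hij)
      have hcard : (k : Cardinal) ≤ ∑ n ∈ t, M.m (E n) := by
        calc (k : Cardinal) = ∑ _n ∈ t, (1 : Cardinal) := by simp [htc]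
          _ ≤ ∑ n ∈ t, M.m (E n) := Finset.sum_le_sum fun n hn =>
              Cardinal.one_le_iff_ne_zero.2 (hts hn)
      calc (k : Cardinal) ≤ ∑ n ∈ t, M.m (E n) := hcard
        _ = M.m (⋃ n ∈ t, E n) := hsum.symm
        _ ≤ M.m (D 0) := M.mono (t.measurableSet_biUnion fun n _ => hEm n) (hm 0)
            (iUnion₂_subset fun n _ => (diff_subset).trans (hA (Nat.zero_le n)))
    exact absurd this (not_le.mpr hfin)
  obtain ⟨N, hN⟩ := hSfin.bddAbove
  have hEz : ∀ n, N + 1 ≤ n → M.m (E n) = 0 := by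
    intro n hn
    by_contra hz
    exact absurd (hN hz) (by omega)
  -- D (N+1) \ ⋂ D ⊆ ⋃ k, E (N+1+k)
  have hsub : D (N + 1) \ (⋂ n, D n) ⊆ ⋃ k, E (N + 1 + k) := by
    rintro x ⟨hxD, hxI⟩
    obtain ⟨j, hj⟩ : ∃ j, x ∉ D j := by
      by_contra hall
      push_neg at hall
      exact hxI (mem_iInter.2 hall)
    have hex : ∃ j, x ∉ D j := ⟨j, hj⟩
    set n := Nat.find hex with hn
    have hnot : x ∉ D n := Nat.find_spec hex
    have hpos : N + 1 < n := by
      rcases Nat.lt_or_ge (N + 1) n with h | h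
      · exact h
      · exact absurd (hA h hxD) hnot
    have hmem : x ∈ D (n - 1) := by
      by_contra hc
      exact Nat.find_min hex (by omega) hc
    have hxE : x ∈ E (n - 1) := ⟨hmem, by
      have heq : n - 1 + 1 = n := by omega
      rw [heq]; exact hnot⟩
    refine mem_iUnion.2 ⟨n - 1 - (N + 1), ?_⟩
    have heq : N + 1 + (n - 1 - (N + 1)) = n - 1 := by omega
    rw [heq]
    exact hxE
  have hImeas : MeasurableSet (⋂ n, D n) := MeasurableSet.iInter fun n => hm n
  have hzero : M.m (D (N + 1) \ ⋂ n, D n) = 0 := by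
    have hU : M.m (⋃ k, E (N + 1 + k)) = 0 :=
      M.m_iUnion_null _ (fun k => hEm _) (fun k => hEz _ (by omega))
    exact le_antisymm (hU ▸ M.mono ((hm (N + 1)).diff hImeas)
      (MeasurableSet.iUnion fun k => hEm _) hsub) (zero_le)
  have hcup : (⋂ n, D n) ∪ (D (N + 1) \ ⋂ n, D n) = D (N + 1) :=
    union_diff_cancel (iInter_subset D (N + 1))
  have := M.m_union hImeas ((hm (N + 1)).diff hImeas) disjoint_sdiff_right
  rw [hcup, hzero, add_zero] at this
  exact this ▸ h1 (N + 1)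

lemma null_of_no_atoms (A : Set ℝ) (hA : MeasurableSet A) (a b : ℝ)
    (hsub : A ⊆ Set.Icc a b) (hfin : M.m A < Cardinal.aleph0)
    (hpt : ∀ x ∈ A, M.m {x} = 0) : M.m A = 0 := by
  classical
  by_contra h
  have h1 : ∀ p : ℝ × ℝ, 1 ≤ M.m (A ∩ Set.Icc p.1 p.2) → ∃ q : ℝ × ℝ,
      (1 ≤ M.m (A ∩ Set.Icc q.1 q.2)) ∧ p.1 ≤ q.1 ∧ q.2 ≤ p.2 ∧
      q.2 - q.1 = (p.2 - p.1) / 2 := by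
    rintro ⟨c, d⟩ hp
    simp only at hp ⊢
    by_cases hcd : c ≤ d
    · set mid := (c + d) / 2 with hmid
      have hsplit : A ∩ Set.Icc c d ⊆ (A ∩ Set.Icc c mid) ∪ (A ∩ Set.Icc mid d) := by
        rintro x ⟨hxA, hx1, hx2⟩
        rcases le_total x mid with hx | hx
        · exact Or.inl ⟨hxA, hx1, hx⟩
        · exact Or.inr ⟨hxA, hx, hx2⟩
      have hle : 1 ≤ M.m (A ∩ Set.Icc c mid) + M.m (A ∩ Set.Icc mid d) := by
        calc (1 : Cardinal) ≤ M.m (A ∩ Set.Icc c d) := hp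
          _ ≤ M.m ((A ∩ Set.Icc c mid) ∪ (A ∩ Set.Icc mid d)) :=
              M.mono (hA.inter measurableSet_Icc)
                ((hA.inter measurableSet_Icc).union (hA.inter measurableSet_Icc)) hsplit
          _ ≤ _ := M.m_union_le (hA.inter measurableSet_Icc) (hA.inter measurableSet_Icc)
      by_cases hz : M.m (A ∩ Set.Icc c mid) = 0
      · refine ⟨(mid, d), ?_, ?_, le_refl d, by simp only; ring⟩
        · have : 1 ≤ M.m (A ∩ Set.Icc mid d) := by
            rwa [hz, zero_add] at hle
          simpa using this
        · simp only [hmid]; linarith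
      · refine ⟨(c, mid), ?_, le_refl c, ?_, by simp only; ring⟩
        · simpa using Cardinal.one_le_iff_ne_zero.2 hz
        · simp only [hmid]; linarith
    · exfalso
      have : A ∩ Set.Icc c d = ∅ := by
        rw [Set.Icc_eq_empty hcd, Set.inter_empty]
      rw [this, M.empty] at hp
      simpa using hp
  choose! g hg1 hg2 hg3 hg4 using h1
  set u : ℕ → ℝ × ℝ := fun n => g^[n] (a, b) with hu_def
  have husucc : ∀ n, u (n + 1) = g (u n) := fun n => Function.iterate_succ_apply' g n (a, b)
  have hu0 : u 0 = (a, b) := rfl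
  have hu : ∀ n, 1 ≤ M.m (A ∩ Set.Icc (u n).1 (u n).2) := by
    intro n
    induction n with
    | zero =>
      rw [hu0]
      simp only
      rw [Set.inter_eq_self_of_subset_left hsub]
      exact Cardinal.one_le_iff_ne_zero.2 h
    | succ n ih =>
      rw [husucc]
      exact hg1 _ ih
  set D : ℕ → Set ℝ := fun n => A ∩ Set.Icc (u n).1 (u n).2 with hD
  have hDm : ∀ n, MeasurableSet (D n) := fun n => hA.inter measurableSet_Icc
  have hanti : ∀ n, D (n + 1) ⊆ D n := by
    intro n
    have h2 := hg2 _ (hu n)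
    have h3 := hg3 _ (hu n)
    rw [← husucc] at h2 h3
    exact Set.inter_subset_inter_right A (Set.Icc_subset_Icc h2 h3)
  have hwidth : ∀ n, (u n).2 - (u n).1 = (b - a) / 2 ^ n := by
    intro n
    induction n with
    | zero => simp [hu0]
    | succ n ih =>
      have h4 := hg4 _ (hu n)
      rw [← husucc] at h4
      rw [h4, ih]
      ring
  have hDfin : M.m (D 0) < Cardinal.aleph0 := by
    have hD0 : D 0 = A := by
      show A ∩ Set.Icc (u 0).1 (u 0).2 = A
      rw [hu0]
      exact Set.inter_eq_self_of_subset_left hsub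
    rw [hD0]; exact hfin
  have hIone : 1 ≤ M.m (⋂ n, D n) := M.one_le_m_iInter D hDm hanti hDfin hu
  have hIne : (⋂ n, D n).Nonempty := by
    rw [Set.nonempty_iff_ne_empty]
    intro hc
    rw [hc, M.empty] at hIone
    simpa using hIone
  obtain ⟨x, hx⟩ := hIne
  have hsingle : (⋂ n, D n) ⊆ {x} := by
    intro y hy
    have hdist : ∀ n, |x - y| ≤ (b - a) / 2 ^ n := by
      intro n
      have hxn := mem_iInter.1 hx n
      have hyn := mem_iInter.1 hy n
      have hx2 := hxn.2
      have hy2 := hyn.2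
      rw [← hwidth n]
      rw [abs_le]
      constructor <;> [skip; skip] <;>
        · simp only [Set.mem_Icc] at hx2 hy2; linarith [hx2.1, hx2.2, hy2.1, hy2.2]
    have htend : Filter.Tendsto (fun n : ℕ => (b - a) / 2 ^ n) Filter.atTop (nhds 0) := by
      have : (fun n : ℕ => (b - a) / 2 ^ n) = fun n : ℕ => (b - a) * (1 / 2 : ℝ) ^ n := by
        funext n; rw [div_pow, one_pow]; ring
      rw [this]
      simpa using (tendsto_pow_atTop_nhds_zero_of_lt_one (by norm_num : (0:ℝ) ≤ 1/2)
        (by norm_num : (1/2 : ℝ) < 1)).const_mul (b - a)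
    have : |x - y| ≤ 0 := ge_of_tendsto htend (Filter.Eventually.of_forall hdist)
    have : x = y := by
      have := abs_nonneg (x - y)
      have hxy : |x - y| = 0 := le_antisymm ‹|x - y| ≤ 0› this
      have := abs_eq_zero.mp hxy
      linarith
    simp [this.symm]
  have hxA : x ∈ A := (mem_iInter.1 hx 0).1
  have : 1 ≤ M.m {x} := le_trans hIone
    (M.mono (MeasurableSet.iInter fun n => hDm n) (measurableSet_singleton x) hsingle)
  rw [hpt x hxA] at this
  simpa using this

end CardinalBorelMeasure

/-- If `K ⊆ [0,∞)` is σ-compact and `M K` is finite, then there is a finite set `F ⊆ K`,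
consisting exactly of the points `x ∈ K` with `M {x} > 0`, such that `M (K \ F) = 0`;
in particular `M K = Σ_{x ∈ F} M {x}`. -/
theorem cardinalMeasure_sigmaCompact_concentrated (M : CardinalBorelMeasure)
    (K : Set ℝ) (hK0 : K ⊆ Set.Ici 0)
    (hK : ∃ C : ℕ → Set ℝ, (∀ n, IsCompact (C n)) ∧ K = ⋃ n, C n)
    (hfin : M.m K < Cardinal.aleph0) :
    ∃ F : Finset ℝ, ↑F ⊆ K ∧ (∀ x ∈ K, (x ∈ F ↔ 0 < M.m {x})) ∧
      M.m (K \ ↑F) = 0 ∧ M.m K = ∑ x ∈ F, M.m {x} := by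
  classical
  obtain ⟨C, hCcpt, hKeq⟩ := hK
  have hKmeas : MeasurableSet K := by
    rw [hKeq]
    exact MeasurableSet.iUnion fun n => (hCcpt n).isClosed.measurableSet
  set S : Set ℝ := {x | x ∈ K ∧ 0 < M.m {x}} with hS
  have hSfin : S.Finite := by
    by_contra hinf
    have hinf' : S.Infinite := hinf
    obtain ⟨n, hn⟩ := Cardinal.lt_aleph0.1 hfin
    obtain ⟨t, hts, htc⟩ := hinf'.exists_subset_card_eq (n + 1)
    have hle : (t.card : Cardinal) ≤ M.m K :=
      M.card_le t K hKmeas (fun x hx => (hts hx).1) (fun x hx => (hts hx).2)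
    rw [htc, hn] at hle
    exact absurd (Nat.cast_le.mp hle) (by omega)
  refine ⟨hSfin.toFinset, ?_, ?_, ?_, ?_⟩
  · intro x hx
    rw [Finset.mem_coe, Set.Finite.mem_toFinset] at hx
    exact hx.1
  · intro x hxK
    rw [Set.Finite.mem_toFinset]
    exact ⟨fun h => h.2, fun h => ⟨hxK, h⟩⟩
  · -- M.m (K \ F) = 0
    have hFmeas : MeasurableSet (↑hSfin.toFinset : Set ℝ) :=
      hSfin.toFinset.finite_toSet.measurableSet
    have hKdiff : K \ ↑hSfin.toFinset = ⋃ n, (C n \ ↑hSfin.toFinset) := by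
      rw [hKeq, Set.iUnion_diff]
    rw [hKdiff]
    apply M.m_iUnion_null
    · exact fun n => (hCcpt n).isClosed.measurableSet.diff hFmeas
    · intro n
      obtain ⟨r, hr⟩ := (hCcpt n).isBounded.subset_closedBall 0
      have hsubIcc : C n \ ↑hSfin.toFinset ⊆ Set.Icc (-r) r := fun x hx => by
        have := hr hx.1
        rwa [Real.closedBall_eq_Icc, zero_sub, zero_add] at this
      apply M.null_of_no_atoms _ ((hCcpt n).isClosed.measurableSet.diff hFmeas) (-r) r hsubIcc
      · refine lt_of_le_of_lt ?_ hfin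
        apply M.mono ((hCcpt n).isClosed.measurableSet.diff hFmeas) hKmeas
        intro x hx
        rw [hKeq]
        exact Set.mem_iUnion.2 ⟨n, hx.1⟩
      · intro x hx
        have hxK : x ∈ K := by rw [hKeq]; exact Set.mem_iUnion.2 ⟨n, hx.1⟩
        have hxnF : x ∉ S := by
          intro hc
          exact hx.2 (by rw [Finset.mem_coe, Set.Finite.mem_toFinset]; exact hc)
        have : ¬ 0 < M.m {x} := fun hc => hxnF ⟨hxK, hc⟩
        exact le_antisymm (not_lt.mp this) (zero_le)
  · -- M.m K = ∑
    have hFK : (↑hSfin.toFinset : Set ℝ) ⊆ K := fun x hx => by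
      rw [Finset.mem_coe, Set.Finite.mem_toFinset] at hx
      exact hx.1
    have hFmeas : MeasurableSet (↑hSfin.toFinset : Set ℝ) :=
      hSfin.toFinset.finite_toSet.measurableSet
    have hzero : M.m (K \ ↑hSfin.toFinset) = 0 := by
      -- same as the previous bullet; reprove
      have hKdiff : K \ ↑hSfin.toFinset = ⋃ n, (C n \ ↑hSfin.toFinset) := by
        rw [hKeq, Set.iUnion_diff]
      rw [hKdiff]
      apply M.m_iUnion_null
      · exact fun n => (hCcpt n).isClosed.measurableSet.diff hFmeas
      · intro n
        obtain ⟨r, hr⟩ := (hCcpt n).isBounded.subset_closedBall 0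
        have hsubIcc : C n \ ↑hSfin.toFinset ⊆ Set.Icc (-r) r := fun x hx => by
          have := hr hx.1
          rwa [Real.closedBall_eq_Icc, zero_sub, zero_add] at this
        apply M.null_of_no_atoms _ ((hCcpt n).isClosed.measurableSet.diff hFmeas) (-r) r hsubIcc
        · refine lt_of_le_of_lt ?_ hfin
          apply M.mono ((hCcpt n).isClosed.measurableSet.diff hFmeas) hKmeas
          intro x hx
          rw [hKeq]
          exact Set.mem_iUnion.2 ⟨n, hx.1⟩
        · intro x hx
          have hxK : x ∈ K := by rw [hKeq]; exact Set.mem_iUnion.2 ⟨n, hx.1⟩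
          have hxnF : x ∉ S := by
            intro hc
            exact hx.2 (by rw [Finset.mem_coe, Set.Finite.mem_toFinset]; exact hc)
          have : ¬ 0 < M.m {x} := fun hc => hxnF ⟨hxK, hc⟩
          exact le_antisymm (not_lt.mp this) (zero_le)
    have hcup : (↑hSfin.toFinset : Set ℝ) ∪ (K \ ↑hSfin.toFinset) = K :=
      Set.union_diff_cancel hFK
    have := M.m_union hFmeas (hKmeas.diff hFmeas) disjoint_sdiff_right
    rw [hcup, hzero, add_zero] at this
    rw [this, M.m_finset]
end

section
/- Let A ≥ 0 be a bounded operator on a complex Hilbert space H with spectral measure E, let (0,∞) = ⋃_k S_k be a countable Borel partition and (a_k) points in (0,∞) such that for some K > 1, K⁻¹ ≤ y/z ≤ K for all y, z ∈ S_k ∪ {a_k} and all k. Define φ(λ) := a_k/λ for λ ∈ S_k and B := E({0}) + ∫_{(0,∞)} φ(λ) dE(λ). Then B is invertible, commutes with A, and B A = Σ_k a_k E(S_k); hence A is topologically equivalent to the operator Σ_k a_k E(S_k) whose spectral measure is supported on {0} ∪ {a_k}. -/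
open MeasureTheory

open scoped ComplexInnerProductSpace

set_option linter.unusedSectionVars false

section Aux
variable {H : Type*} [NormedAddCommGroup H] [InnerProductSpace ℂ H] [CompleteSpace H]

lemma pyth_finset (s : Finset ℕ) (v : ℕ → H)
    (ho : ∀ j k, j ≠ k → ⟪v j, v k⟫ = 0) :
    ‖∑ k ∈ s, v k‖ ^ 2 = ∑ k ∈ s, ‖v k‖ ^ 2 := by
  classical
  induction s using Finset.induction_on with
  | empty => simp
  | @insert b s' hns ih =>
    rw [Finset.sum_insert hns, Finset.sum_insert hns, norm_add_sq (𝕜 := ℂ), ih]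
    have : ⟪v b, ∑ k ∈ s', v k⟫ = 0 := by
      rw [inner_sum]
      exact Finset.sum_eq_zero fun k hk => ho b k (fun h => hns (h ▸ hk))
    rw [this]
    simp

lemma hasSum_norm_sq_of_orth {v : ℕ → H} {s : H}
    (ho : ∀ j k, j ≠ k → ⟪v j, v k⟫ = 0) (hv : HasSum v s) :
    HasSum (fun k => ‖v k‖ ^ 2) (‖s‖ ^ 2) := by
  have : Filter.Tendsto (fun F : Finset ℕ => ‖∑ k ∈ F, v k‖ ^ 2) Filter.atTop (nhds (‖s‖ ^ 2)) :=
    (hv.norm.pow 2 : _)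
  exact this.congr fun F => pyth_finset F v ho

lemma summable_of_orth {v : ℕ → H}
    (ho : ∀ j k, j ≠ k → ⟪v j, v k⟫ = 0)
    (hs : Summable fun k => ‖v k‖ ^ 2) : Summable v := by
  rw [summable_iff_vanishing] at hs ⊢
  intro e he
  rcases Metric.mem_nhds_iff.mp he with ⟨ε, hε, hball⟩
  rcases hs (Metric.ball 0 (ε ^ 2)) (Metric.ball_mem_nhds 0 (by positivity)) with ⟨s, hsv⟩
  refine ⟨s, fun t ht => hball ?_⟩
  have h1 := hsv t ht
  rw [Metric.mem_ball, dist_zero_right, Real.norm_eq_abs] at h1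
  have h2 : ∑ k ∈ t, ‖v k‖ ^ 2 < ε ^ 2 := lt_of_le_of_lt (le_abs_self _) h1
  rw [← pyth_finset t v ho] at h2
  rw [Metric.mem_ball, dist_zero_right]
  exact lt_of_pow_lt_pow_left₀ 2 hε.le h2

end Aux

set_option linter.unusedSectionVars false

section Spec
variable {H : Type*} [NormedAddCommGroup H] [InnerProductSpace ℂ H] [CompleteSpace H]
variable {A : H →L[ℂ] H} {E : Set ℝ → (H →L[ℂ] H)} {μ : H → Measure ℝ}

open scoped ComplexInnerProductSpace


namespace IsSpectralMeasureOf

variable (hE : IsSpectralMeasureOf A E μ)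
include hE

lemma inner_E_left (T : Set ℝ) (x y : H) : ⟪E T x, y⟫ = ⟪x, E T y⟫ := by
  have h : ContinuousLinearMap.adjoint (E T) = E T := by
    have h0 := hE.selfAdjoint T
    rwa [IsSelfAdjoint, ContinuousLinearMap.star_eq_adjoint] at h0
  rw [← h, ContinuousLinearMap.adjoint_inner_left, h]

lemma re_inner_E (T : Set ℝ) (x : H) : Complex.re ⟪x, E T x⟫ = ‖E T x‖ ^ 2 := by
  have h1 : E T (E T x) = E T x := by
    have := hE.idem T
    calc E T (E T x) = (E T ∘L E T) x := rfl
    _ = E T x := by rw [this]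
  calc Complex.re ⟪x, E T x⟫ = Complex.re ⟪x, E T (E T x)⟫ := by rw [h1]
  _ = Complex.re ⟪E T x, E T x⟫ := by rw [hE.inner_E_left]
  _ = ‖E T x‖ ^ 2 := by
    have := inner_self_eq_norm_sq (𝕜 := ℂ) (E T x)
    exact this

lemma E_E (T : Set ℝ) (x : H) : E T (E T x) = E T x := by
  calc E T (E T x) = (E T ∘L E T) x := rfl
  _ = E T x := by rw [hE.idem T]

lemma E_inter_apply {T T' : Set ℝ} (hT : MeasurableSet T) (hT' : MeasurableSet T')
    (x : H) : E T (E T' x) = E (T ∩ T') x := by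
  calc E T (E T' x) = (E T ∘L E T') x := rfl
  _ = E (T ∩ T') x := by rw [hE.inter T T' hT hT']

lemma E_disj_zero {T T' : Set ℝ} (hT : MeasurableSet T) (hT' : MeasurableSet T')
    (hd : Disjoint T T') (x : H) : E T (E T' x) = 0 := by
  rw [hE.E_inter_apply hT hT', Set.disjoint_iff_inter_eq_empty.mp hd, hE.empty]
  rfl

lemma inner_E_disjoint {T T' : Set ℝ} (hT : MeasurableSet T) (hT' : MeasurableSet T')
    (hd : Disjoint T T') (x y : H) : ⟪E T x, E T' y⟫ = 0 := by
  rw [hE.inner_E_left, hE.E_disj_zero hT hT' hd, inner_zero_right]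

lemma E_union {T T' : Set ℝ} (hT : MeasurableSet T) (hT' : MeasurableSet T')
    (hd : Disjoint T T') (x : H) : E (T ∪ T') x = E T x + E T' x := by
  classical
  set f : ℕ → Set ℝ := fun n => if n = 0 then T else if n = 1 then T' else ∅ with hf
  have hfd : Pairwise (Function.onFun Disjoint f) := by
    intro i j hij
    unfold Function.onFun
    simp only [hf]
    split_ifs <;> simp_all <;> first
      | exact hd | exact hd.symm
  have hfm : ∀ n, MeasurableSet (f n) := by
    intro n; simp only [hf]; split_ifs <;> simp [hT, hT']
  have hu : (⋃ n, f n) = T ∪ T' := by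
    apply Set.Subset.antisymm
    · refine Set.iUnion_subset fun n => ?_
      simp only [hf]; split_ifs <;> simp
    · intro t ht
      rcases ht with h | h
      · exact Set.mem_iUnion.mpr ⟨0, by simpa [hf] using h⟩
      · exact Set.mem_iUnion.mpr ⟨1, by simpa [hf] using h⟩
  have h1 := hE.countablyAdditive f hfd hfm x
  rw [hu] at h1
  have h2 : HasSum (fun n => E (f n) x) (E T x + E T' x) := by
    have h3 : ∀ n ∉ ({0, 1} : Finset ℕ), E (f n) x = 0 := by
      intro n hn
      simp only [Finset.mem_insert, Finset.mem_singleton] at hn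
      push_neg at hn
      simp only [hf, if_neg hn.1, if_neg hn.2, hE.empty]
      rfl
    have : HasSum (fun n => E (f n) x) (∑ n ∈ ({0, 1} : Finset ℕ), E (f n) x) :=
      hasSum_sum_of_ne_finset_zero h3
    simpa [hf] using this
  exact h1.unique h2

lemma E_compl {T : Set ℝ} (hT : MeasurableSet T) (x : H) : E Tᶜ x = x - E T x := by
  have h := hE.E_union hT hT.compl disjoint_compl_right x
  rw [Set.union_compl_self, hE.univ] at h
  have : x = E T x + E Tᶜ x := h
  rw [eq_sub_iff_add_eq]
  linear_combination (norm := module) this.symm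

lemma E_conc_zero {T T' : Set ℝ} (hT : MeasurableSet T) (hT' : MeasurableSet T')
    (hd : Disjoint T T') {x : H} (hx : E T x = x) : E T' x = 0 := by
  conv_lhs => rw [← hx]
  exact hE.E_disj_zero hT' hT hd.symm x

lemma mass_eq (x : H) : μ x Set.univ = ENNReal.ofReal (‖x‖ ^ 2) := by
  rw [hE.mu_eq x Set.univ MeasurableSet.univ, hE.univ]
  congr 1
  have := inner_self_eq_norm_sq (𝕜 := ℂ) x
  exact this

lemma finite (x : H) : IsFiniteMeasure (μ x) :=
  ⟨by rw [hE.mass_eq x]; exact ENNReal.ofReal_lt_top⟩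

lemma mu_apply {T : Set ℝ} (hT : MeasurableSet T) (x : H) :
    μ x T = ENNReal.ofReal (‖E T x‖ ^ 2) := by
  rw [hE.mu_eq x T hT, hE.re_inner_E]

lemma mu_conc {T : Set ℝ} (hT : MeasurableSet T) {x : H} (hx : E T x = x) :
    μ x Tᶜ = 0 := by
  rw [hE.mu_apply hT.compl, hE.E_conc_zero hT hT.compl disjoint_compl_right hx]
  simp

lemma conc_facts {x : H} {m M' : ℝ} (hm : 0 ≤ m) (hconc : μ x (Set.Icc m M')ᶜ = 0) :
    m * ‖x‖ ^ 2 ≤ Complex.re ⟪x, A x⟫ ∧ Complex.re ⟪x, A x⟫ ≤ M' * ‖x‖ ^ 2 ∧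
    m ^ 2 * ‖x‖ ^ 2 ≤ ‖A x‖ ^ 2 ∧ ‖A x‖ ^ 2 ≤ M' ^ 2 * ‖x‖ ^ 2 ∧
    Integrable (fun t => t) (μ x) ∧ Integrable (fun t => t ^ 2) (μ x) := by
  haveI := hE.finite x
  have hae : ∀ᵐ t ∂(μ x), t ∈ Set.Icc m M' := by
    rw [ae_iff]
    exact hconc
  set C := max |m| |M'| with hC
  have habs : ∀ᵐ t ∂(μ x), |t| ≤ C := by
    filter_upwards [hae] with t ht
    rcases ht with ⟨h1, h2⟩
    rw [abs_le]
    constructor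
    · calc -C ≤ -|m| := neg_le_neg (le_max_left _ _)
      _ ≤ m := neg_abs_le m
      _ ≤ t := h1
    · calc t ≤ M' := h2
      _ ≤ |M'| := le_abs_self M'
      _ ≤ C := le_max_right _ _
  have hint_id : Integrable (fun t => t) (μ x) := by
    refine Integrable.mono' (integrable_const C) measurable_id.aestronglyMeasurable ?_
    filter_upwards [habs] with t ht
    simpa using ht
  have hint_sq : Integrable (fun t => t ^ 2) (μ x) := by
    refine Integrable.mono' (integrable_const (C ^ 2)) (by fun_prop) ?_
    filter_upwards [habs] with t ht
    rw [Real.norm_eq_abs, abs_pow]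
    exact pow_le_pow_left₀ (abs_nonneg t) ht 2
  have hmass : (μ x Set.univ).toReal = ‖x‖ ^ 2 := by
    rw [hE.mass_eq x, ENNReal.toReal_ofReal (sq_nonneg _)]
  have hconst : ∀ c : ℝ, ∫ _, c ∂(μ x) = c * ‖x‖ ^ 2 := by
    intro c
    rw [integral_const, measureReal_def, hmass, smul_eq_mul, mul_comm]
  refine ⟨?_, ?_, ?_, ?_, hint_id, hint_sq⟩
  · rw [hE.integral_id x, ← hconst m]
    refine integral_mono_ae (integrable_const m) hint_id ?_
    filter_upwards [hae] with t ht using ht.1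
  · rw [hE.integral_id x, ← hconst M']
    refine integral_mono_ae hint_id (integrable_const M') ?_
    filter_upwards [hae] with t ht using ht.2
  · rw [hE.integral_sq x, ← hconst (m ^ 2)]
    refine integral_mono_ae (integrable_const (m ^ 2)) hint_sq ?_
    filter_upwards [hae] with t ht
    exact pow_le_pow_left₀ hm ht.1 2
  · rw [hE.integral_sq x, ← hconst (M' ^ 2)]
    refine integral_mono_ae hint_sq (integrable_const (M' ^ 2)) ?_
    filter_upwards [hae] with t ht
    exact pow_le_pow_left₀ (le_trans hm ht.1) ht.2 2

lemma E_Ioc_zero {M N : ℝ} (hM : ‖A‖ < M) (x : H) : E (Set.Ioc M N) x = 0 := by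
  set x' := E (Set.Ioc M N) x with hx'def
  have hx' : E (Set.Ioc M N) x' = x' := hE.E_E _ x
  have hMnn : (0:ℝ) ≤ M := le_of_lt (lt_of_le_of_lt (norm_nonneg A) hM)
  have hsub : Set.Ioc M N ⊆ Set.Icc M (max M N) := fun t ht =>
    ⟨le_of_lt ht.1, le_trans ht.2 (le_max_right _ _)⟩
  have hconc : μ x' (Set.Icc M (max M N))ᶜ = 0 := by
    have h1 : μ x' (Set.Ioc M N)ᶜ = 0 := hE.mu_conc measurableSet_Ioc hx'
    exact le_antisymm (le_trans (measure_mono (Set.compl_subset_compl.mpr hsub)) h1.le) zero_le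
  obtain ⟨-, -, hlow, -, -, -⟩ := hE.conc_facts hMnn hconc
  have hop := A.le_opNorm x'
  have h3 : ‖A x'‖ ^ 2 ≤ ‖A‖ ^ 2 * ‖x'‖ ^ 2 := by
    nlinarith [norm_nonneg (A x'), norm_nonneg A, norm_nonneg x']
  have h4 : ‖A‖ ^ 2 < M ^ 2 := by nlinarith [norm_nonneg A]
  have h5 : ‖x'‖ ^ 2 = 0 := by nlinarith [sq_nonneg ‖x'‖]
  have h6 : ‖x'‖ = 0 := by
    have := sq_eq_zero_iff.mp h5
    exact this
  exact norm_eq_zero.mp h6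

lemma E_Ioi_zero (x : H) : E (Set.Ioi (‖A‖ + 1)) x = 0 := by
  set M := ‖A‖ + 1 with hM
  set f : ℕ → Set ℝ := fun n => Set.Ioc (M + n) (M + n + 1) with hf
  have hfd : Pairwise (Function.onFun Disjoint f) := by
    intro i j hij
    unfold Function.onFun
    simp only [hf]
    rw [Set.Ioc_disjoint_Ioc]
    rcases lt_or_gt_of_ne hij with h | h
    · have : (i:ℝ) + 1 ≤ j := by exact_mod_cast Nat.succ_le_of_lt h
      calc min (M + i + 1) (M + j + 1) ≤ M + i + 1 := min_le_left _ _
      _ ≤ M + j := by linarith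
      _ ≤ max (M + i) (M + j) := le_max_right _ _
    · have : (j:ℝ) + 1 ≤ i := by exact_mod_cast Nat.succ_le_of_lt h
      calc min (M + i + 1) (M + j + 1) ≤ M + j + 1 := min_le_right _ _
      _ ≤ M + i := by linarith
      _ ≤ max (M + i) (M + j) := le_max_left _ _
  have hfm : ∀ n, MeasurableSet (f n) := fun n => measurableSet_Ioc
  have hu : (⋃ n, f n) = Set.Ioi M := by
    apply Set.Subset.antisymm
    · refine Set.iUnion_subset fun n t ht => ?_
      have : (0:ℝ) ≤ n := Nat.cast_nonneg n
      exact Set.mem_Ioi.mpr (by have := ht.1; linarith)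
    · intro t ht
      rw [Set.mem_Ioi] at ht
      have hs : (0:ℝ) < t - M := by linarith
      set n := ⌈t - M⌉₊ - 1 with hn
      have hn1 : 1 ≤ ⌈t - M⌉₊ := Nat.one_le_ceil_iff.mpr hs
      have hcast : (n : ℝ) = (⌈t - M⌉₊ : ℝ) - 1 := by
        rw [hn, Nat.cast_sub hn1, Nat.cast_one]
      refine Set.mem_iUnion.mpr ⟨n, ?_, ?_⟩
      · rw [hcast]
        have := Nat.ceil_lt_add_one hs.le
        linarith
      · rw [hcast]
        have := Nat.le_ceil (t - M)
        linarith
  have h1 := hE.countablyAdditive f hfd hfm x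
  rw [hu] at h1
  have h2 : HasSum (fun n => E (f n) x) 0 := by
    have : ∀ n, E (f n) x = 0 := fun n =>
      hE.E_Ioc_zero (by have : (0:ℝ) ≤ n := Nat.cast_nonneg n; rw [hM]; linarith) x
    simpa [this] using (hasSum_zero : HasSum (fun _ : ℕ => (0:H)) 0)
  exact h1.unique h2

lemma mu_global_conc (x : H) : μ x (Set.Icc 0 (‖A‖ + 1))ᶜ = 0 := by
  have hsplit : (Set.Icc (0:ℝ) (‖A‖ + 1))ᶜ ⊆ Set.Iio 0 ∪ Set.Ioi (‖A‖ + 1) := by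
    intro t ht
    simp only [Set.mem_compl_iff, Set.mem_Icc, not_and_or, not_le] at ht
    rcases ht with h | h
    · exact Or.inl h
    · exact Or.inr h
  have h1 : μ x (Set.Iio 0) = 0 := by
    rw [hE.mu_apply measurableSet_Iio, hE.suppNonneg]
    simp
  have h2 : μ x (Set.Ioi (‖A‖ + 1)) = 0 := by
    rw [hE.mu_apply measurableSet_Ioi, hE.E_Ioi_zero]
    simp
  refine le_antisymm ?_ zero_le
  calc μ x (Set.Icc (0:ℝ) (‖A‖ + 1))ᶜ ≤ μ x (Set.Iio 0 ∪ Set.Ioi (‖A‖ + 1)) :=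
    measure_mono hsplit
  _ ≤ μ x (Set.Iio 0) + μ x (Set.Ioi (‖A‖ + 1)) := measure_union_le _ _
  _ = 0 := by rw [h1, h2, add_zero]

lemma integrable_global (x : H) :
    Integrable (fun t => t) (μ x) ∧ Integrable (fun t => t ^ 2) (μ x) := by
  obtain ⟨-, -, -, -, h1, h2⟩ := hE.conc_facts le_rfl (hE.mu_global_conc x)
  exact ⟨h1, h2⟩

lemma inner_A_cross (hA : IsSelfAdjoint A) {T T' : Set ℝ}
    (hT : MeasurableSet T) (hT' : MeasurableSet T') (hd : Disjoint T T')
    {x y : H} (hx : E T x = x) (hy : E T' y = y) : ⟪y, A x⟫ = 0 := by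
  have hAadj : ContinuousLinearMap.adjoint A = A := by
    rwa [IsSelfAdjoint, ContinuousLinearMap.star_eq_adjoint] at hA
  have hxy : ∀ U : Set ℝ, MeasurableSet U → ⟪x, E U y⟫ = 0 := by
    intro U hU
    conv_lhs => rw [← hx, ← hy]
    rw [hE.inner_E_left, hE.E_inter_apply hU hT', hE.E_inter_apply hT (hU.inter hT')]
    have : T ∩ (U ∩ T') = ∅ := by
      apply Set.eq_empty_of_subset_empty
      calc T ∩ (U ∩ T') ⊆ T ∩ T' := Set.inter_subset_inter_right T Set.inter_subset_right
      _ = ∅ := Set.disjoint_iff_inter_eq_empty.mp hd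
    rw [this, hE.empty]
    simp
  have hyx : ∀ U : Set ℝ, MeasurableSet U → ⟪y, E U x⟫ = 0 := by
    intro U hU
    conv_lhs => rw [← hy, ← hx]
    rw [hE.inner_E_left, hE.E_inter_apply hU hT, hE.E_inter_apply hT' (hU.inter hT)]
    have : T' ∩ (U ∩ T) = ∅ := by
      apply Set.eq_empty_of_subset_empty
      calc T' ∩ (U ∩ T) ⊆ T' ∩ T := Set.inter_subset_inter_right T' Set.inter_subset_right
      _ = ∅ := Set.disjoint_iff_inter_eq_empty.mp hd.symm
    rw [this, hE.empty]
    simp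
  have hmu : ∀ c : ℂ, (starRingEnd ℂ) c * c = 1 → μ (x + c • y) = μ x + μ y := by
    intro c hc
    refine Measure.ext fun U hU => ?_
    rw [Measure.add_apply, hE.mu_eq _ U hU, hE.mu_eq _ U hU, hE.mu_eq _ U hU]
    have hexp : (inner ℂ (x + c • y) (E U (x + c • y)) : ℂ)
        = ⟪x, E U x⟫ + c * ⟪x, E U y⟫ + (starRingEnd ℂ) c * ⟪y, E U x⟫
          + ((starRingEnd ℂ) c * c) * ⟪y, E U y⟫ := by
      rw [map_add, ContinuousLinearMap.map_smul, inner_add_left, inner_add_right, inner_add_right,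
        inner_smul_left, inner_smul_right, inner_smul_left, inner_smul_right]
      ring
    rw [hexp, hxy U hU, hyx U hU, hc]
    simp only [mul_zero, add_zero, one_mul, Complex.add_re]
    rw [ENNReal.ofReal_add]
    · rw [hE.re_inner_E]; exact sq_nonneg _
    · rw [hE.re_inner_E]; exact sq_nonneg _
  have hq : ∀ c : ℂ, (starRingEnd ℂ) c * c = 1 →
      Complex.re ⟪x + c • y, A (x + c • y)⟫
        = Complex.re ⟪x, A x⟫ + Complex.re ⟪y, A y⟫ := by
    intro c hc
    rw [hE.integral_id, hE.integral_id, hE.integral_id, hmu c hc,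
      integral_add_measure (hE.integrable_global x).1 (hE.integrable_global y).1]
  have hconjz : (inner ℂ x (A y) : ℂ) = (starRingEnd ℂ) ⟪y, A x⟫ := by
    rw [← inner_conj_symm]
    congr 1
    conv_lhs => rw [← hAadj]
    rw [ContinuousLinearMap.adjoint_inner_left]
  have hexpA : ∀ c : ℂ, (starRingEnd ℂ) c * c = 1 →
      Complex.re ⟪x + c • y, A (x + c • y)⟫
        = Complex.re ⟪x, A x⟫ + Complex.re ⟪y, A y⟫
          + Complex.re (c * (starRingEnd ℂ) ⟪y, A x⟫ + (starRingEnd ℂ) c * ⟪y, A x⟫) := by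
    intro c hc
    have : (inner ℂ (x + c • y) (A (x + c • y)) : ℂ)
        = ⟪x, A x⟫ + c * ⟪x, A y⟫ + (starRingEnd ℂ) c * ⟪y, A x⟫
          + ((starRingEnd ℂ) c * c) * ⟪y, A y⟫ := by
      rw [map_add, ContinuousLinearMap.map_smul, inner_add_left, inner_add_right, inner_add_right,
        inner_smul_left, inner_smul_right, inner_smul_left, inner_smul_right]
      ring
    rw [this, hc, hconjz]
    simp only [one_mul, Complex.add_re]
    ring
  have hzero : ∀ c : ℂ, (starRingEnd ℂ) c * c = 1 →
      Complex.re (c * (starRingEnd ℂ) ⟪y, A x⟫ + (starRingEnd ℂ) c * ⟪y, A x⟫) = 0 := by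
    intro c hc
    have h1 := hexpA c hc
    have h2 := hq c hc
    linarith [h1 ▸ h2]
  have hre : Complex.re ⟪y, A x⟫ = 0 := by
    have := hzero 1 (by simp)
    simp only [map_one, one_mul, Complex.add_re, Complex.conj_re] at this
    linarith
  have him : Complex.im ⟪y, A x⟫ = 0 := by
    have := hzero Complex.I (by simp)
    set z := (inner ℂ y (A x) : ℂ) with hz
    have h3 : Complex.re (Complex.I * (starRingEnd ℂ) z + (starRingEnd ℂ) Complex.I * z)
        = 2 * Complex.im z := by
      simp [Complex.mul_re, Complex.conj_re, Complex.conj_im]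
      ring
    rw [h3] at this
    linarith
  exact Complex.ext hre him

lemma A_commE (hA : IsSelfAdjoint A) {T : Set ℝ} (hT : MeasurableSet T) (x : H) :
    A (E T x) = E T (A x) := by
  have half : ∀ (T' : Set ℝ), MeasurableSet T' → ∀ w : H,
      E T' (A (E T' w)) = A (E T' w) := by
    intro T' hT' w
    set u := A (E T' w) with hu
    have hx1 : E T' (E T' w) = E T' w := hE.E_E T' w
    have hy1 : E T'ᶜ (E T'ᶜ u) = E T'ᶜ u := hE.E_E T'ᶜ u
    have hcross := hE.inner_A_cross hA hT' hT'.compl disjoint_compl_right hx1 hy1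
    have hnorm : ‖E T'ᶜ u‖ ^ 2 = 0 := by
      rw [← hE.re_inner_E T'ᶜ u]
      have : (inner ℂ u (E T'ᶜ u) : ℂ) = (starRingEnd ℂ) ⟪E T'ᶜ u, u⟫ := by
        rw [inner_conj_symm]
      rw [this, Complex.conj_re, hcross, Complex.zero_re]
    have hcz : E T'ᶜ u = 0 := norm_eq_zero.mp (sq_eq_zero_iff.mp hnorm)
    have hcompl := hE.E_compl hT' u
    rw [hcz] at hcompl
    exact (sub_eq_zero.mp hcompl.symm).symm
  have hdecomp : x = E T x + E Tᶜ x := by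
    have := hE.E_compl hT x
    rw [this]
    abel
  have h1 : E T (A (E Tᶜ x)) = 0 := by
    rw [← half Tᶜ hT.compl x]
    exact hE.E_disj_zero hT hT.compl disjoint_compl_right _
  have hfin : E T (A x) = A (E T x) := by
    conv_lhs => rw [hdecomp]
    rw [map_add A, map_add (E T), h1, add_zero, half T hT x]
  exact hfin.symm

lemma A_E_zero_pt (x : H) : A (E {0} x) = 0 := by
  set x' := E ({0} : Set ℝ) x with hx'
  have hfix : E ({0} : Set ℝ) x' = x' := hE.E_E _ x
  have hconc : μ x' ({(0:ℝ)}ᶜ) = 0 := hE.mu_conc (measurableSet_singleton 0) hfix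
  have hae : ∀ᵐ t ∂(μ x'), t ∈ ({(0:ℝ)} : Set ℝ) := by
    rw [ae_iff]; exact hconc
  have hzero : (fun t : ℝ => t ^ 2) =ᵐ[μ x'] (fun _ => (0:ℝ)) := by
    filter_upwards [hae] with t ht
    rw [Set.mem_singleton_iff] at ht
    simp [ht]
  have : ‖A x'‖ ^ 2 = 0 := by
    rw [hE.integral_sq x', integral_congr_ae hzero, integral_zero]
  exact norm_eq_zero.mp (sq_eq_zero_iff.mp this)

end IsSpectralMeasureOf
end Spec



/-- Let `A ≥ 0` be bounded on a complex Hilbert space with spectral measure `E`, let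
`(0,∞) = ⋃ k, S k` be a countable Borel partition and `(a k)` points of `(0,∞)` such that
for some `K > 1` all ratios of elements of `S k ∪ {a k}` lie in `[K⁻¹, K]`. Then the
operator `B = E({0}) + ∫_{(0,∞)} (a_k/λ) dE(λ)` is invertible, commutes with `A`, and
`B A = Σ_k a_k E(S k)`; hence `A` is topologically equivalent to `Σ_k a_k E(S k)`,
whose spectral measure is supported on `{0} ∪ {a k}`. -/
theorem topologically_equivalent_to_discretized
    {H : Type*} [NormedAddCommGroup H] [InnerProductSpace ℂ H] [CompleteSpace H]
    (A : H →L[ℂ] H) (hA : A.IsPositive)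
    (E : Set ℝ → (H →L[ℂ] H)) (μmeas : H → Measure ℝ)
    (hE : IsSpectralMeasureOf A E μmeas)
    (S : ℕ → Set ℝ) (hSmeas : ∀ k, MeasurableSet (S k))
    (hSdisj : Pairwise (Function.onFun Disjoint S))
    (hScover : (⋃ k, S k) = Set.Ioi (0 : ℝ))
    (a : ℕ → ℝ) (ha : ∀ k, 0 < a k)
    (K : ℝ) (hK : 1 < K)
    (hlog : ∀ k, ∀ y ∈ S k ∪ {a k}, ∀ z ∈ S k ∪ {a k}, K⁻¹ ≤ y / z ∧ y / z ≤ K) :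
    ∃ B : H →L[ℂ] H,
      (∃ B' : H →L[ℂ] H, B ∘L B' = 1 ∧ B' ∘L B = 1) ∧
      B ∘L A = A ∘L B ∧
      (∀ x : H, HasSum (fun k => a k • E (S k) x) ((B ∘L A) x)) ∧
      ∃ (U V : H ≃L[ℂ] H), ∀ x : H, (B ∘L A) x = V (A (U x)) := by
  classical
  have hAsa : IsSelfAdjoint A := hA.isSelfAdjoint
  have hK0 : (0 : ℝ) < K := lt_trans one_pos hK
  have hSsub : ∀ k, S k ⊆ Set.Ioi (0 : ℝ) := fun k => hScover ▸ Set.subset_iUnion S k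
  have h0none : ∀ k, (0 : ℝ) ∉ S k := fun k h => lt_irrefl 0 (Set.mem_Ioi.mp (hSsub k h))
  have h0meas : MeasurableSet ({0} : Set ℝ) := measurableSet_singleton 0
  have hdisj0 : ∀ k, Disjoint ({0} : Set ℝ) (S k) :=
    fun k => Set.disjoint_singleton_left.mpr (h0none k)
  have hdisj0I : Disjoint ({0} : Set ℝ) (Set.Ioi 0) :=
    Set.disjoint_singleton_left.mpr (by simp)
  have hcomm : ∀ (T : Set ℝ), MeasurableSet T → ∀ x : H, A (E T x) = E T (A x) :=
    fun T hT x => hE.A_commE hAsa hT x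
  have hA0 : ∀ x : H, A (E {0} x) = 0 := hE.A_E_zero_pt
  -- interval bounds for each k
  have hSk_bnd : ∀ k, S k ⊆ Set.Icc (a k / K) (a k * K) := by
    intro k y hy
    obtain ⟨h1, h2⟩ := hlog k y (Or.inl hy) (a k) (Or.inr rfl)
    have hak := ha k
    constructor
    · have h1' : K⁻¹ * a k ≤ y := (le_div_iff₀ hak).mp h1
      rw [div_eq_mul_inv, mul_comm]
      exact h1'
    · have h2' : y ≤ K * a k := (div_le_iff₀ hak).mp h2
      rw [mul_comm]
      exact h2'
  have hconck : ∀ k (x : H),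
      μmeas (E (S k) x) (Set.Icc (a k / K) (a k * K))ᶜ = 0 := by
    intro k x
    have hfix : E (S k) (E (S k) x) = E (S k) x := hE.E_E _ x
    have h1 : μmeas (E (S k) x) (S k)ᶜ = 0 := hE.mu_conc (hSmeas k) hfix
    exact le_antisymm
      (le_trans (measure_mono (Set.compl_subset_compl.mpr (hSk_bnd k))) h1.le) zero_le
  have hlowk : ∀ k (x : H), (a k / K) * ‖E (S k) x‖ ≤ ‖A (E (S k) x)‖ := by
    intro k x
    obtain ⟨hre, -, -, -, -, -⟩ :=
      hE.conc_facts (le_of_lt (div_pos (ha k) hK0)) (hconck k x)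
    set w := E (S k) x with hw
    have hcs : Complex.re ⟪w, A w⟫ ≤ ‖w‖ * ‖A w‖ := by
      calc Complex.re ⟪w, A w⟫ ≤ ‖(⟪w, A w⟫ : ℂ)‖ := Complex.re_le_norm _
      _ ≤ ‖w‖ * ‖A w‖ := norm_inner_le_norm w (A w)
    rcases eq_or_lt_of_le (norm_nonneg w) with h0 | h0
    · rw [← h0, mul_zero]; exact norm_nonneg _
    · have hmm : (a k / K) * ‖w‖ * ‖w‖ ≤ ‖A w‖ * ‖w‖ := by nlinarith [le_trans hre hcs]
      exact le_of_mul_le_mul_right hmm h0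
  have hhighk : ∀ k (x : H), ‖A (E (S k) x)‖ ≤ (a k * K) * ‖E (S k) x‖ := by
    intro k x
    obtain ⟨-, -, -, hsq, -, -⟩ :=
      hE.conc_facts (le_of_lt (div_pos (ha k) hK0)) (hconck k x)
    set w := E (S k) x with hw
    have h1 : ‖A w‖ ^ 2 ≤ ((a k * K) * ‖w‖) ^ 2 := by rw [mul_pow]; exact hsq
    have h2 : (0:ℝ) ≤ (a k * K) * ‖w‖ :=
      mul_nonneg (mul_nonneg (ha k).le hK0.le) (norm_nonneg _)
    nlinarith [norm_nonneg (A w)]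
  -- decomposition
  have hsum_p : ∀ x : H, HasSum (fun k => E (S k) x) (E (Set.Ioi 0) x) := by
    intro x
    have := hE.countablyAdditive S hSdisj hSmeas x
    rwa [hScover] at this
  have hdecomp : ∀ x : H, E ({0} : Set ℝ) x + E (Set.Ioi 0) x = x := by
    intro x
    have hIci : E (Set.Ici (0:ℝ)) x = x := by
      have hu := hE.E_union (T := Set.Iio (0:ℝ)) (T' := Set.Ici (0:ℝ)) measurableSet_Iio
        measurableSet_Ici (Set.Iio_disjoint_Ici le_rfl) x
      rw [Set.Iio_union_Ici, hE.univ, hE.suppNonneg] at hu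
      simpa using hu.symm
    have hset : ({0} : Set ℝ) ∪ Set.Ioi 0 = Set.Ici 0 := by
      ext t
      simp [Set.mem_Ici, Set.mem_Ioi, le_iff_lt_or_eq, or_comm, eq_comm]
    have h2 := hE.E_union h0meas measurableSet_Ioi hdisj0I x
    rw [hset, hIci] at h2
    exact h2.symm
  have horthS : ∀ (x y : H) (j k : ℕ), j ≠ k → ⟪E (S j) x, E (S k) y⟫ = 0 :=
    fun x y j k hjk => hE.inner_E_disjoint (hSmeas j) (hSmeas k) (hSdisj hjk) x y
  have hnormsq : ∀ x : H,
      HasSum (fun k => ‖E (S k) x‖ ^ 2) (‖E (Set.Ioi 0) x‖ ^ 2) :=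
    fun x => hasSum_norm_sq_of_orth (fun j k hjk => horthS x x j k hjk) (hsum_p x)
  have hprojle : ∀ (T : Set ℝ) (x : H), ‖E T x‖ ≤ ‖x‖ := by
    intro T x
    have h1 : ‖E T x‖ ^ 2 = Complex.re ⟪x, E T x⟫ := (hE.re_inner_E T x).symm
    have h2 : Complex.re ⟪x, E T x⟫ ≤ ‖x‖ * ‖E T x‖ := by
      calc Complex.re ⟪x, E T x⟫ ≤ ‖(⟪x, E T x⟫ : ℂ)‖ := Complex.re_le_norm _
      _ ≤ ‖x‖ * ‖E T x‖ := norm_inner_le_norm _ _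
    rcases eq_or_lt_of_le (norm_nonneg (E T x)) with h0 | h0
    · rw [← h0]; exact norm_nonneg x
    · have : ‖E T x‖ * ‖E T x‖ ≤ ‖x‖ * ‖E T x‖ := by nlinarith
      exact le_of_mul_le_mul_right this h0
  -- the summand family for B'
  set u : H → ℕ → H := fun x k => (a k)⁻¹ • A (E (S k) x) with hu
  have hufix : ∀ x k, E (S k) (u x k) = u x k := by
    intro x k
    rw [hu]
    simp only
    rw [ContinuousLinearMap.map_smul_of_tower, hcomm (S k) (hSmeas k), hE.E_E]
  have huorth : ∀ (x y : H) (j k : ℕ), j ≠ k → ⟪u x j, u y k⟫ = 0 := by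
    intro x y j k hjk
    rw [← hufix x j, ← hufix y k]
    exact hE.inner_E_disjoint (hSmeas j) (hSmeas k) (hSdisj hjk) _ _
  have hunorm_le : ∀ (x : H) k, ‖u x k‖ ≤ K * ‖E (S k) x‖ := by
    intro x k
    rw [hu]
    simp only
    rw [norm_smul, Real.norm_eq_abs, abs_of_pos (inv_pos.mpr (ha k))]
    have hc : (a k)⁻¹ * (a k * K) = K := by
      rw [← mul_assoc, inv_mul_cancel₀ (ha k).ne', one_mul]
    calc (a k)⁻¹ * ‖A (E (S k) x)‖ ≤ (a k)⁻¹ * ((a k * K) * ‖E (S k) x‖) := by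
          exact mul_le_mul_of_nonneg_left (hhighk k x) (inv_pos.mpr (ha k)).le
    _ = K * ‖E (S k) x‖ := by rw [← mul_assoc, hc]
  have hunorm_ge : ∀ (x : H) k, K⁻¹ * ‖E (S k) x‖ ≤ ‖u x k‖ := by
    intro x k
    rw [hu]
    simp only
    rw [norm_smul, Real.norm_eq_abs, abs_of_pos (inv_pos.mpr (ha k))]
    have hc : (a k)⁻¹ * (a k / K) = K⁻¹ := by
      rw [div_eq_mul_inv, ← mul_assoc, inv_mul_cancel₀ (ha k).ne', one_mul]
    calc K⁻¹ * ‖E (S k) x‖ = (a k)⁻¹ * ((a k / K) * ‖E (S k) x‖) := by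
          rw [← mul_assoc, hc]
    _ ≤ (a k)⁻¹ * ‖A (E (S k) x)‖ :=
      mul_le_mul_of_nonneg_left (hlowk k x) (inv_pos.mpr (ha k)).le
  have husumsq : ∀ x : H, Summable (fun k => ‖u x k‖ ^ 2) := by
    intro x
    refine Summable.of_nonneg_of_le (fun k => sq_nonneg _)
      (fun k => ?_) (((hnormsq x).summable).mul_left (K ^ 2))
    calc ‖u x k‖ ^ 2 ≤ (K * ‖E (S k) x‖) ^ 2 :=
      pow_le_pow_left₀ (norm_nonneg _) (hunorm_le x k) 2
    _ = K ^ 2 * ‖E (S k) x‖ ^ 2 := by ring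
  have husum : ∀ x : H, Summable (u x) :=
    fun x => summable_of_orth (fun j k h => huorth x x j k h) (husumsq x)
  have hsqle : ∀ {p q : ℝ}, 0 ≤ p → 0 ≤ q → p ^ 2 ≤ q ^ 2 → p ≤ q := by
    intro p q hp hq h; nlinarith
  -- the sum part as a continuous linear map
  have hadd : ∀ x y : H, (∑' k, u (x + y) k) = (∑' k, u x k) + (∑' k, u y k) := by
    intro x y
    have h1 : ∀ k, u (x + y) k = u x k + u y k := by
      intro k; rw [hu]; simp only [map_add, smul_add]
    rw [tsum_congr h1, Summable.tsum_add (husum x) (husum y)]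
  have hsmul : ∀ (c : ℂ) (x : H), (∑' k, u (c • x) k) = c • ∑' k, u x k := by
    intro c x
    have h1 : ∀ k, u (c • x) k = c • u x k := by
      intro k; rw [hu]
      simp only
      rw [ContinuousLinearMap.map_smul, ContinuousLinearMap.map_smul, smul_comm]
    rw [tsum_congr h1]
    exact ((husum x).hasSum.const_smul c).tsum_eq
  have hssumle : ∀ x : H, ‖∑' k, u x k‖ ≤ K * ‖x‖ := by
    intro x
    have hhs : HasSum (u x) (∑' k, u x k) := (husum x).hasSum
    have hnsq : HasSum (fun k => ‖u x k‖ ^ 2) (‖∑' k, u x k‖ ^ 2) :=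
      hasSum_norm_sq_of_orth (fun j k h => huorth x x j k h) hhs
    have hle : ‖∑' k, u x k‖ ^ 2 ≤ K ^ 2 * ‖E (Set.Ioi 0) x‖ ^ 2 := by
      refine hasSum_le (fun k => ?_) hnsq ((hnormsq x).mul_left (K ^ 2))
      calc ‖u x k‖ ^ 2 ≤ (K * ‖E (S k) x‖) ^ 2 :=
        pow_le_pow_left₀ (norm_nonneg _) (hunorm_le x k) 2
      _ = K ^ 2 * ‖E (S k) x‖ ^ 2 := by ring
    have h2 : ‖∑' k, u x k‖ ≤ K * ‖E (Set.Ioi 0) x‖ := by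
      refine hsqle (norm_nonneg _) (mul_nonneg hK0.le (norm_nonneg _)) ?_
      calc ‖∑' k, u x k‖ ^ 2 ≤ K ^ 2 * ‖E (Set.Ioi 0) x‖ ^ 2 := hle
      _ = (K * ‖E (Set.Ioi 0) x‖) ^ 2 := by ring
    calc ‖∑' k, u x k‖ ≤ K * ‖E (Set.Ioi 0) x‖ := h2
    _ ≤ K * ‖x‖ := mul_le_mul_of_nonneg_left (hprojle _ x) hK0.le
  set Bsum : H →L[ℂ] H := LinearMap.mkContinuous
    { toFun := fun x => ∑' k, u x k
      map_add' := hadd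
      map_smul' := fun c x => hsmul c x } K hssumle with hBsum
  have hBsum_app : ∀ x : H, Bsum x = ∑' k, u x k := fun x => rfl
  set B' : H →L[ℂ] H := E {0} + Bsum with hB'def
  have hB'app : ∀ x : H, B' x = E {0} x + ∑' k, u x k := fun x => rfl
  have hinner_sum_right : ∀ (w : H) (v : ℕ → H) (s : H), HasSum v s →
      (inner ℂ w s : ℂ) = ∑' k, (inner ℂ w (v k) : ℂ) := by
    intro w v s hs
    exact ((hs.mapL (innerSL ℂ w)).tsum_eq).symm
  have horth0sum : ∀ x : H, (inner ℂ (E ({0} : Set ℝ) x) (∑' k, u x k) : ℂ) = 0 := by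
    intro x
    rw [hinner_sum_right _ _ _ (husum x).hasSum]
    have h1 : ∀ k, (inner ℂ (E ({0} : Set ℝ) x) (u x k) : ℂ) = 0 := by
      intro k
      conv_lhs => rw [← hufix x k]
      exact hE.inner_E_disjoint h0meas (hSmeas k) (hdisj0 k) x (u x k)
    rw [tsum_congr h1, tsum_zero]
  have hB'normsq : ∀ x : H,
      ‖B' x‖ ^ 2 = ‖E ({0} : Set ℝ) x‖ ^ 2 + ‖∑' k, u x k‖ ^ 2 := by
    intro x
    rw [hB'app x, norm_add_sq (𝕜 := ℂ), horth0sum x]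
    simp
  have hxnormsq : ∀ x : H,
      ‖x‖ ^ 2 = ‖E ({0} : Set ℝ) x‖ ^ 2 + ‖E (Set.Ioi 0) x‖ ^ 2 := by
    intro x
    conv_lhs => rw [← hdecomp x]
    rw [norm_add_sq (𝕜 := ℂ), hE.inner_E_disjoint h0meas measurableSet_Ioi hdisj0I x x]
    simp
  have hbb : ∀ x : H, ‖x‖ ≤ K * ‖B' x‖ := by
    intro x
    have h1 : K⁻¹ ^ 2 * ‖E (Set.Ioi 0) x‖ ^ 2 ≤ ‖∑' k, u x k‖ ^ 2 := by
      have hnsq : HasSum (fun k => ‖u x k‖ ^ 2) (‖∑' k, u x k‖ ^ 2) :=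
        hasSum_norm_sq_of_orth (fun j k h => huorth x x j k h) (husum x).hasSum
      refine hasSum_le (fun k => ?_) ((hnormsq x).mul_left (K⁻¹ ^ 2)) hnsq
      calc K⁻¹ ^ 2 * ‖E (S k) x‖ ^ 2 = (K⁻¹ * ‖E (S k) x‖) ^ 2 := by ring
      _ ≤ ‖u x k‖ ^ 2 := pow_le_pow_left₀
        (mul_nonneg (inv_pos.mpr hK0).le (norm_nonneg _)) (hunorm_ge x k) 2
    have hKinv1 : K⁻¹ ^ 2 ≤ 1 := by
      have h0 : K⁻¹ ≤ 1 := by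
        rw [inv_le_one_iff₀]
        right; exact hK.le
      have h0' : (0:ℝ) ≤ K⁻¹ := (inv_pos.mpr hK0).le
      nlinarith
    have h3 : K⁻¹ ^ 2 * ‖E ({0} : Set ℝ) x‖ ^ 2 ≤ ‖E ({0} : Set ℝ) x‖ ^ 2 := by
      nlinarith [sq_nonneg ‖E ({0} : Set ℝ) x‖]
    have h2 : K⁻¹ ^ 2 * ‖x‖ ^ 2 ≤ ‖B' x‖ ^ 2 := by
      rw [hxnormsq x, hB'normsq x]
      calc K⁻¹ ^ 2 * (‖E ({0} : Set ℝ) x‖ ^ 2 + ‖E (Set.Ioi 0) x‖ ^ 2)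
          = K⁻¹ ^ 2 * ‖E ({0} : Set ℝ) x‖ ^ 2 + K⁻¹ ^ 2 * ‖E (Set.Ioi 0) x‖ ^ 2 := by ring
      _ ≤ ‖E ({0} : Set ℝ) x‖ ^ 2 + ‖∑' k, u x k‖ ^ 2 := add_le_add h3 h1
    have h4 : (K⁻¹ * ‖x‖) ^ 2 ≤ ‖B' x‖ ^ 2 := by
      calc (K⁻¹ * ‖x‖) ^ 2 = K⁻¹ ^ 2 * ‖x‖ ^ 2 := by ring
      _ ≤ ‖B' x‖ ^ 2 := h2
    have h5 : K⁻¹ * ‖x‖ ≤ ‖B' x‖ :=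
      hsqle (mul_nonneg (inv_pos.mpr hK0).le (norm_nonneg _)) (norm_nonneg _) h4
    calc ‖x‖ = K * (K⁻¹ * ‖x‖) := by field_simp
    _ ≤ K * ‖B' x‖ := mul_le_mul_of_nonneg_left h5 hK0.le
  -- real-scalar inner ℂ lemmas
  have hsr_left : ∀ (r : ℝ) (v w : H), (inner ℂ (r • v) w : ℂ) = (r : ℂ) * inner ℂ v w := by
    intro r v w
    rw [(algebraMap_smul ℂ r v).symm, inner_smul_left]
    norm_num
  have hsr_right : ∀ (r : ℝ) (v w : H), (inner ℂ v (r • w) : ℂ) = (r : ℂ) * inner ℂ v w := by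
    intro r v w
    rw [(algebraMap_smul ℂ r w).symm, inner_smul_right]
    norm_num
  -- symmetry of B'
  have hsymm : ∀ x y : H, (inner ℂ (B' x) y : ℂ) = inner ℂ x (B' y) := by
    intro x y
    have hAadj : ∀ w z : H, (inner ℂ (A w) z : ℂ) = inner ℂ w (A z) := by
      intro w z
      have hadjA : ContinuousLinearMap.adjoint A = A := by
        have h0 := hAsa
        rwa [IsSelfAdjoint, ContinuousLinearMap.star_eq_adjoint] at h0
      conv_lhs => rw [← hadjA]
      rw [ContinuousLinearMap.adjoint_inner_left]
    have hterm : ∀ k, (inner ℂ (u x k) y : ℂ) = inner ℂ x (u y k) := by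
      intro k
      rw [hu]
      simp only
      rw [hsr_left, hsr_right]
      congr 1
      rw [hAadj, hE.inner_E_left, ← hcomm (S k) (hSmeas k)]
    have hleft : (inner ℂ (∑' k, u x k) y : ℂ) = ∑' k, (inner ℂ (u x k) y : ℂ) := by
      have h := ((husum x).hasSum.mapL (innerSL ℂ y)).star
      have h2 : HasSum (fun k => (inner ℂ (u x k) y : ℂ)) (inner ℂ (∑' k, u x k) y : ℂ) := by
        simpa [innerSL_apply_apply, RCLike.star_def, inner_conj_symm] using h
      exact h2.tsum_eq.symm
    rw [hB'app x, hB'app y, inner_add_left, inner_add_right, hE.inner_E_left, hleft,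
      hinner_sum_right x (u y) _ (husum y).hasSum, tsum_congr hterm]
  -- injectivity and closed range
  have hker : LinearMap.ker (B' : H →ₗ[ℂ] H) = ⊥ := by
    rw [LinearMap.ker_eq_bot']
    intro m hm
    have h2 := hbb m
    rw [show B' m = 0 from hm, norm_zero, mul_zero] at h2
    exact norm_le_zero_iff.mp h2
  have hanti : AntilipschitzWith (Real.toNNReal K) B' := by
    refine ContinuousLinearMap.antilipschitz_of_bound B' ?_
    intro x
    rw [Real.coe_toNNReal K hK0.le]
    exact hbb x
  have hclosed : IsClosed (Set.range B') := hanti.isClosed_range B'.uniformContinuous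
  have hclosedS : IsClosed ((LinearMap.range (B' : H →ₗ[ℂ] H) : Submodule ℂ H) : Set H) := by
    have : ((LinearMap.range (B' : H →ₗ[ℂ] H) : Submodule ℂ H) : Set H) = Set.range B' := by
      ext z; simp [LinearMap.mem_range]
    rw [this]; exact hclosed
  haveI : CompleteSpace (LinearMap.range (B' : H →ₗ[ℂ] H) : Submodule ℂ H) := hclosedS.completeSpace_coe
  have horthbot : (LinearMap.range (B' : H →ₗ[ℂ] H) : Submodule ℂ H)ᗮ = ⊥ := by
    rw [Submodule.eq_bot_iff]
    intro yy hyy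
    have hyy' : ∀ z ∈ (LinearMap.range (B' : H →ₗ[ℂ] H) : Submodule ℂ H), (inner ℂ z yy : ℂ) = 0 :=
      (Submodule.mem_orthogonal _ yy).mp hyy
    have hzero : B' yy = 0 := by
      have h1 : ∀ w : H, (inner ℂ w (B' yy) : ℂ) = 0 := by
        intro w
        rw [← hsymm w yy]
        exact hyy' (B' w) (LinearMap.mem_range_self _ w)
      exact inner_self_eq_zero.mp (h1 (B' yy))
    have h2 := hbb yy
    rw [hzero, norm_zero, mul_zero] at h2
    exact norm_le_zero_iff.mp h2
  have hrange : LinearMap.range (B' : H →ₗ[ℂ] H) = ⊤ := Submodule.orthogonal_eq_bot_iff.mp horthbot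
  set e : H ≃L[ℂ] H := ContinuousLinearEquiv.ofBijective B' hker hrange with he
  have heB : ∀ x : H, e x = B' x := fun x => rfl
  set B : H →L[ℂ] H := (e.symm : H →L[ℂ] H) with hB
  have hBB' : ∀ x : H, B (B' x) = x := by
    intro x
    have h0 : B (B' x) = e.symm (e x) := rfl
    rw [h0, e.symm_apply_apply]
  have hB'B : ∀ x : H, B' (B x) = x := by
    intro x
    have h0 : B' (B x) = e (e.symm x) := rfl
    rw [h0, e.apply_symm_apply]
  -- B' commutes with A
  have hcommB' : ∀ x : H, B' (A x) = A (B' x) := by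
    intro x
    have hterm : ∀ k, u (A x) k = A (u x k) := by
      intro k; rw [hu]; simp only
      rw [← hcomm (S k) (hSmeas k), ContinuousLinearMap.map_smul_of_tower]
    have hsum2 : A (∑' k, u x k) = ∑' k, A (u x k) :=
      ((husum x).hasSum.mapL A).tsum_eq.symm
    rw [hB'app (A x), hB'app x]
    calc E {0} (A x) + ∑' k, u (A x) k = A (E {0} x) + ∑' k, A (u x k) := by
          rw [← hcomm {0} h0meas x, tsum_congr hterm]
    _ = A (E {0} x + ∑' k, u x k) := by rw [map_add, hsum2]
  have hinjB' : Function.Injective B' := by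
    intro p q hpq
    have h2 : ‖p - q‖ ≤ K * ‖B' (p - q)‖ := hbb _
    rw [map_sub, hpq, sub_self, norm_zero, mul_zero] at h2
    exact sub_eq_zero.mp (norm_le_zero_iff.mp h2)
  have hcommB : ∀ x : H, B (A x) = A (B x) := by
    intro x
    have h1 : B' (A (B x)) = A x := by rw [hcommB', hB'B]
    have h2 : B' (B (A x)) = A x := hB'B (A x)
    exact hinjB' (h2.trans h1.symm)
  -- the discretized operator as the sum
  have hmain : ∀ x : H, HasSum (fun k => a k • E (S k) x) (B (A x)) := by
    intro x
    set v : ℕ → H := fun k => a k • E (S k) x with hv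
    have hvorth : ∀ j k, j ≠ k → (inner ℂ (v j) (v k) : ℂ) = 0 := by
      intro j k hjk
      rw [hv]; simp only
      rw [hsr_left, hsr_right, horthS x x j k hjk, mul_zero, mul_zero]
    have hvnorm : ∀ k, ‖v k‖ ≤ K * ‖E (S k) (A x)‖ := by
      intro k
      rw [hv]; simp only
      rw [norm_smul, Real.norm_eq_abs, abs_of_pos (ha k)]
      have h1 : (a k / K) * ‖E (S k) x‖ ≤ ‖A (E (S k) x)‖ := hlowk k x
      rw [hcomm (S k) (hSmeas k) x] at h1
      calc a k * ‖E (S k) x‖ = K * ((a k / K) * ‖E (S k) x‖) := by field_simp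
      _ ≤ K * ‖E (S k) (A x)‖ := mul_le_mul_of_nonneg_left h1 hK0.le
    have hvsumsq : Summable (fun k => ‖v k‖ ^ 2) := by
      refine Summable.of_nonneg_of_le (fun k => sq_nonneg _) (fun k => ?_)
        (((hnormsq (A x)).summable).mul_left (K ^ 2))
      calc ‖v k‖ ^ 2 ≤ (K * ‖E (S k) (A x)‖) ^ 2 :=
        pow_le_pow_left₀ (norm_nonneg _) (hvnorm k) 2
      _ = K ^ 2 * ‖E (S k) (A x)‖ ^ 2 := by ring
    have hvsum : Summable v := summable_of_orth hvorth hvsumsq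
    set y := ∑' k, v k with hy
    have hhv : HasSum v y := hvsum.hasSum
    have hE0y : E ({0} : Set ℝ) y = 0 := by
      have h1 : HasSum (fun k => E ({0} : Set ℝ) (v k)) (E ({0} : Set ℝ) y) := hhv.mapL _
      have h2 : ∀ k, E ({0} : Set ℝ) (v k) = 0 := by
        intro k
        rw [hv]; simp only
        rw [ContinuousLinearMap.map_smul_of_tower,
          hE.E_disj_zero h0meas (hSmeas k) (hdisj0 k), smul_zero]
      have h3 : HasSum (fun k => E ({0} : Set ℝ) (v k)) 0 := by
        simpa [h2] using (hasSum_zero : HasSum (fun _ : ℕ => (0 : H)) 0)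
      exact h1.unique h3
    have hpy : ∀ j, E (S j) y = a j • E (S j) x := by
      intro j
      have h1 : HasSum (fun k => E (S j) (v k)) (E (S j) y) := hhv.mapL _
      have h2 : ∀ k, k ≠ j → E (S j) (v k) = 0 := by
        intro k hkj
        rw [hv]; simp only
        rw [ContinuousLinearMap.map_smul_of_tower,
          hE.E_disj_zero (hSmeas j) (hSmeas k) (hSdisj (Ne.symm hkj)), smul_zero]
      have h3 : HasSum (fun k => E (S j) (v k)) (E (S j) (v j)) := hasSum_single j h2
      have h4 : E (S j) (v j) = a j • E (S j) x := by
        rw [hv]; simp only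
        rw [ContinuousLinearMap.map_smul_of_tower, hE.E_E]
      exact h1.unique (h4 ▸ h3)
    have hB'y : B' y = A x := by
      have h5 : ∀ k, u y k = A (E (S k) x) := by
        intro k
        rw [hu]; simp only
        rw [hpy k, ContinuousLinearMap.map_smul_of_tower, smul_smul,
          inv_mul_cancel₀ (ha k).ne', one_smul]
      have h6 : HasSum (fun k => A (E (S k) x)) (A (E (Set.Ioi 0) x)) := (hsum_p x).mapL A
      rw [hB'app y, hE0y, zero_add, tsum_congr h5, h6.tsum_eq]
      have h7 : E (Set.Ioi 0) x = x - E ({0} : Set ℝ) x := by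
        have h8 := hdecomp x
        linear_combination (norm := module) h8
      rw [h7, map_sub, hA0 x, sub_zero]
    have h8 : B (A x) = y := by rw [← hB'y, hBB']
    rw [h8]
    exact hhv
  refine ⟨B, ⟨B', ?_, ?_⟩, ?_, ?_, ⟨ContinuousLinearEquiv.refl ℂ H, e.symm, ?_⟩⟩
  · ext x
    exact hBB' x
  · ext x
    exact hB'B x
  · ext x
    exact hcommB x
  · intro x
    exact hmain x
  · intro x
    rfl
end

section
/- Let T be a bounded operator on a complex Hilbert space H, A := sqrt(T* T) with spectral measure E. Then the set of vectors x ∈ H satisfying ‖T x‖ = ‖T‖·‖x‖ is exactly the closed subspace E({‖T‖})H, the range of the spectral projection of A at the singleton {‖T‖}. -/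
open MeasureTheory

/-- Auxiliary: the spectral projections of a set and its complement sum to the identity. -/
lemma IsSpectralMeasureOf.split {H : Type*} [NormedAddCommGroup H] [InnerProductSpace ℂ H]
    [CompleteSpace H] {A : H →L[ℂ] H} {E : Set ℝ → (H →L[ℂ] H)} {μ : H → Measure ℝ}
    (hE : IsSpectralMeasureOf A E μ) (S : Set ℝ) (hS : MeasurableSet S) (x : H) :
    E S x + E Sᶜ x = x := by
  classical
  set f : ℕ → Set ℝ := fun n => if n = 0 then S else if n = 1 then Sᶜ else ∅ with hf
  have hpw : Pairwise (Function.onFun Disjoint f) := by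
    intro i j hij
    simp only [Function.onFun]
    rcases i with _ | _ | i <;> rcases j with _ | _ | j <;>
      first
        | exact absurd rfl hij
        | simp [f, disjoint_compl_right, disjoint_compl_left]
  have hmeas : ∀ n, MeasurableSet (f n) := by
    intro n
    rcases n with _ | _ | n <;> simp [f, hS, hS.compl]
  have huniv : (⋃ n, f n) = Set.univ := by
    apply Set.eq_univ_of_forall
    intro t
    by_cases ht : t ∈ S
    · exact Set.mem_iUnion.mpr ⟨0, by simpa [f] using ht⟩
    · exact Set.mem_iUnion.mpr ⟨1, by simpa [f] using ht⟩
  have hsum := hE.countablyAdditive f hpw hmeas x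
  rw [huniv, hE.univ] at hsum
  have h01 : ∀ n ∉ ({0, 1} : Finset ℕ), E (f n) x = 0 := by
    intro n hn
    rcases n with _ | _ | n
    · simp at hn
    · simp at hn
    · have : f (n + 2) = ∅ := by simp [f]
      rw [this, hE.empty]
      rfl
  have hsum2 : HasSum (fun n => E (f n) x) (∑ n ∈ ({0, 1} : Finset ℕ), E (f n) x) :=
    hasSum_sum_of_ne_finset_zero h01
  have hsumval : (∑ n ∈ ({0, 1} : Finset ℕ), E (f n) x) = E S x + E Sᶜ x := by
    rw [Finset.sum_insert (by norm_num), Finset.sum_singleton]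
    simp [f]
  rw [hsumval] at hsum2
  have := hsum2.unique hsum
  simpa using this

/-- For a bounded operator `T` on a complex Hilbert space and `A = sqrt (T* T)` with
spectral measure `E`, the set of vectors `x` with `‖T x‖ = ‖T‖ ‖x‖` is exactly the closed
subspace `E({‖T‖}) H`, the range of the spectral projection of `A` at `{‖T‖}`. -/
theorem norm_attaining_vectors_eq_spectral_subspace
    {H : Type*} [NormedAddCommGroup H] [InnerProductSpace ℂ H] [CompleteSpace H]
    (T : H →L[ℂ] H) (A : H →L[ℂ] H)
    (hA : A.IsPositive)
    (hAA : A ∘L A = ContinuousLinearMap.adjoint T ∘L T)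
    (E : Set ℝ → (H →L[ℂ] H)) (μmeas : H → Measure ℝ)
    (hE : IsSpectralMeasureOf A E μmeas) :
    {x : H | ‖T x‖ = ‖T‖ * ‖x‖} = (LinearMap.range (E {‖T‖} : H →ₗ[ℂ] H) : Set H) := by
  classical
  set c : ℝ := ‖T‖ with hcdef
  have hc0 : (0 : ℝ) ≤ c := norm_nonneg _
  -- ‖A x‖² = ‖T x‖²
  have hAT : ∀ x : H, ‖A x‖ ^ 2 = ‖T x‖ ^ 2 := by
    intro x
    have hsa : ContinuousLinearMap.adjoint A = A :=
      ContinuousLinearMap.isSelfAdjoint_iff'.mp hA.isSelfAdjoint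
    have h1 : (inner ℂ (A x) (A x) : ℂ) = inner ℂ (T x) (T x) := by
      calc (inner ℂ (A x) (A x) : ℂ) = inner ℂ x (ContinuousLinearMap.adjoint A (A x)) := by
            rw [ContinuousLinearMap.adjoint_inner_right]
        _ = inner ℂ x ((A ∘L A) x) := by rw [hsa]; rfl
        _ = inner ℂ x (ContinuousLinearMap.adjoint T (T x)) := by rw [hAA]; rfl
        _ = inner ℂ (T x) (T x) := by rw [ContinuousLinearMap.adjoint_inner_right]
    have := congrArg Complex.re h1
    rwa [← RCLike.re_to_complex, ← RCLike.re_to_complex, inner_self_eq_norm_sq,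
      inner_self_eq_norm_sq] at this
  have hTsq : ∀ x : H, ∫ t, t ^ 2 ∂(μmeas x) = ‖T x‖ ^ 2 := fun x => by
    rw [← hE.integral_sq, hAT]
  -- re ⟪x, E S x⟫ = ‖E S x‖²
  have hre : ∀ (S : Set ℝ) (x : H), Complex.re (inner ℂ x (E S x)) = ‖E S x‖ ^ 2 := by
    intro S x
    have hsa : ContinuousLinearMap.adjoint (E S) = E S :=
      ContinuousLinearMap.isSelfAdjoint_iff'.mp (hE.selfAdjoint S)
    have h1 : (inner ℂ x (E S x) : ℂ) = inner ℂ (E S x) (E S x) := by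
      calc (inner ℂ x (E S x) : ℂ) = inner ℂ x ((E S ∘L E S) x) := by rw [hE.idem]
        _ = inner ℂ x (E S (E S x)) := rfl
        _ = inner ℂ x (ContinuousLinearMap.adjoint (E S) (E S x)) := by rw [hsa]
        _ = inner ℂ (E S x) (E S x) := by rw [ContinuousLinearMap.adjoint_inner_right]
    rw [h1, ← RCLike.re_to_complex, inner_self_eq_norm_sq]
  have hmu : ∀ (S : Set ℝ), MeasurableSet S → ∀ x : H,
      μmeas x S = ENNReal.ofReal (‖E S x‖ ^ 2) := by
    intro S hS x; rw [hE.mu_eq x S hS, hre]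
  have hmuuniv : ∀ x : H, μmeas x Set.univ = ENNReal.ofReal (‖x‖ ^ 2) := by
    intro x
    rw [hmu Set.univ MeasurableSet.univ x, hE.univ]
    rfl
  haveI hfin : ∀ x : H, IsFiniteMeasure (μmeas x) := by
    intro x
    refine ⟨?_⟩
    rw [hmuuniv x]
    exact ENNReal.ofReal_lt_top
  have hMuniv : ∀ x : H, (μmeas x Set.univ).toReal = ‖x‖ ^ 2 := by
    intro x; rw [hmuuniv x, ENNReal.toReal_ofReal (by positivity)]
  -- μ_x vanishes above c
  have hIoi : ∀ x : H, μmeas x (Set.Ioi c) = 0 := by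
    intro x
    have hSn : ∀ n : ℕ, μmeas x (Set.Ioc (c + 1/(n+1)) (n : ℝ)) = 0 := by
      intro n
      set δ : ℝ := 1/(n+1) with hδdef
      have hδ : 0 < δ := by positivity
      set S : Set ℝ := Set.Ioc (c + δ) (n : ℝ) with hSdef
      have hSm : MeasurableSet S := measurableSet_Ioc
      set y : H := E S x with hydef
      have hEc : E Sᶜ y = 0 := by
        have h := congrArg (fun (F : H →L[ℂ] H) => F x) (hE.inter Sᶜ S hSm.compl hSm)
        simp only [ContinuousLinearMap.comp_apply, Set.compl_inter_self, hE.empty] at h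
        simpa using h
      have hyc : μmeas y Sᶜ = 0 := by
        rw [hmu Sᶜ hSm.compl y, hEc]
        simp
      have haem : ∀ᵐ t ∂(μmeas y), t ∈ S := by
        rw [MeasureTheory.ae_iff]
        exact hyc
      have hint : Integrable (fun t : ℝ => t ^ 2) (μmeas y) := by
        refine Integrable.mono' (integrable_const ((n : ℝ) ^ 2)) ?_ ?_
        · exact (continuous_pow 2).aestronglyMeasurable
        · filter_upwards [haem] with t ht
          rw [Real.norm_eq_abs, abs_of_nonneg (by positivity)]
          have h1 : (0:ℝ) ≤ t := le_trans (by positivity) ht.1.le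
          exact pow_le_pow_left₀ h1 ht.2 2
      have hlow : (c + δ) ^ 2 * (μmeas y Set.univ).toReal ≤ ∫ t, t ^ 2 ∂(μmeas y) := by
        have h := integral_mono_ae (integrable_const ((c + δ) ^ 2)) hint ?_
        · rwa [integral_const, smul_eq_mul, mul_comm] at h
        · filter_upwards [haem] with t ht
          exact pow_le_pow_left₀ (by positivity) ht.1.le 2
      have hup : ∫ t, t ^ 2 ∂(μmeas y) ≤ c ^ 2 * ‖y‖ ^ 2 := by
        rw [hTsq y]
        have h1 : ‖T y‖ ≤ c * ‖y‖ := T.le_opNorm y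
        calc ‖T y‖ ^ 2 ≤ (c * ‖y‖) ^ 2 := pow_le_pow_left₀ (norm_nonneg _) h1 2
          _ = c ^ 2 * ‖y‖ ^ 2 := by ring
      rw [hMuniv y] at hlow
      have hy0 : ‖y‖ ^ 2 = 0 := by
        by_contra h
        have hs : 0 < ‖y‖ ^ 2 := lt_of_le_of_ne (sq_nonneg _) (Ne.symm h)
        have hpos : 0 < (2*c*δ + δ*δ) * ‖y‖ ^ 2 := mul_pos (by nlinarith) hs
        nlinarith
      have hy0' : y = 0 := by
        rwa [pow_eq_zero_iff (by norm_num), norm_eq_zero] at hy0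
      rw [hmu S hSm x, ← hydef, hy0']
      simp
    have hsub : Set.Ioi c ⊆ ⋃ n : ℕ, Set.Ioc (c + 1/(n+1)) (n : ℝ) := by
      intro t ht
      obtain ⟨n₁, hn₁⟩ := exists_nat_one_div_lt (sub_pos.mpr ht : (0:ℝ) < t - c)
      obtain ⟨n₂, hn₂⟩ := exists_nat_ge t
      refine Set.mem_iUnion.mpr ⟨max n₁ n₂, ?_⟩
      have hm1 : ((n₁ : ℝ)) ≤ ((max n₁ n₂ : ℕ) : ℝ) := Nat.cast_le.mpr (le_max_left n₁ n₂)
      have hm2 : ((n₂ : ℝ)) ≤ ((max n₁ n₂ : ℕ) : ℝ) := Nat.cast_le.mpr (le_max_right n₁ n₂)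
      constructor
      · have h1 : (1:ℝ)/((max n₁ n₂ : ℕ) + 1) ≤ 1/((n₁ : ℝ)+1) :=
          one_div_le_one_div_of_le (by positivity) (by linarith)
        linarith
      · linarith
    exact le_antisymm (le_trans (measure_mono hsub)
      (le_of_eq (measure_iUnion_null hSn))) (zero_le)
  have hIio : ∀ x : H, μmeas x (Set.Iio 0) = 0 := by
    intro x
    rw [hmu (Set.Iio 0) measurableSet_Iio x, hE.suppNonneg]
    simp
  have haeIcc : ∀ x : H, ∀ᵐ t ∂(μmeas x), t ∈ Set.Icc 0 c := by
    intro x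
    rw [MeasureTheory.ae_iff]
    have hset : {t : ℝ | t ∉ Set.Icc 0 c} = Set.Iio 0 ∪ Set.Ioi c := by
      ext t
      simp only [Set.mem_setOf_eq, Set.mem_Icc, not_and_or, not_le, Set.mem_union,
        Set.mem_Iio, Set.mem_Ioi]
    rw [hset]
    exact measure_union_null (hIio x) (hIoi x)
  -- main equality
  ext x
  simp only [Set.mem_setOf_eq, SetLike.mem_coe, LinearMap.mem_range]
  constructor
  · -- forward: norm attaining ⇒ in range
    intro hx
    have hI : ∫ t, t ^ 2 ∂(μmeas x) = c ^ 2 * ‖x‖ ^ 2 := by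
      rw [hTsq x, hx]; ring
    have hint : Integrable (fun t : ℝ => t ^ 2) (μmeas x) := by
      refine Integrable.mono' (integrable_const (c ^ 2)) ?_ ?_
      · exact (continuous_pow 2).aestronglyMeasurable
      · filter_upwards [haeIcc x] with t ht
        rw [Real.norm_eq_abs, abs_of_nonneg (by positivity)]
        exact pow_le_pow_left₀ ht.1 ht.2 2
    have hzero : ∫ t, (c ^ 2 - t ^ 2) ∂(μmeas x) = 0 := by
      rw [integral_sub (integrable_const _) hint, integral_const, smul_eq_mul, measureReal_def, hMuniv x, hI]
      ring
    have hae0 : (fun t : ℝ => c ^ 2 - t ^ 2) =ᵐ[μmeas x] 0 := by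
      refine (integral_eq_zero_iff_of_nonneg_ae ?_ ((integrable_const _).sub hint)).mp hzero
      filter_upwards [haeIcc x] with t ht
      have := pow_le_pow_left₀ ht.1 ht.2 2
      simpa using this
    have haec : ∀ᵐ t ∂(μmeas x), t ∈ ({c} : Set ℝ) := by
      filter_upwards [haeIcc x, hae0] with t ht h0
      have h1 : t ^ 2 = c ^ 2 := by
        have h2 : c ^ 2 - t ^ 2 = 0 := h0
        linarith
      exact Set.mem_singleton_iff.mpr ((sq_eq_sq₀ ht.1 hc0).mp h1)
    have hcompl : μmeas x ({c} : Set ℝ)ᶜ = 0 := by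
      have h := haec
      rw [MeasureTheory.ae_iff] at h
      exact h
    have hEc0 : E ({c} : Set ℝ)ᶜ x = 0 := by
      rw [hmu ({c} : Set ℝ)ᶜ (measurableSet_singleton c).compl x] at hcompl
      have h1 := ENNReal.ofReal_eq_zero.mp hcompl
      have h2 : ‖E ({c} : Set ℝ)ᶜ x‖ ^ 2 = 0 := le_antisymm h1 (by positivity)
      rwa [pow_eq_zero_iff (by norm_num), norm_eq_zero] at h2
    have hfix : E ({c} : Set ℝ) x = x := by
      have h := hE.split ({c} : Set ℝ) (measurableSet_singleton c) x
      rwa [hEc0, add_zero] at h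
    exact ⟨x, hfix⟩
  · -- reverse: x = E {c} u ⇒ norm attaining
    rintro ⟨u, hu⟩
    have hfix : E ({c} : Set ℝ) x = x := by
      rw [← hu]
      have h := congrArg (fun (F : H →L[ℂ] H) => F u) (hE.idem ({c} : Set ℝ))
      simpa using h
    have hEc0 : E ({c} : Set ℝ)ᶜ x = 0 := by
      conv_lhs => rw [← hfix]
      have h := congrArg (fun (F : H →L[ℂ] H) => F x)
        (hE.inter ({c} : Set ℝ)ᶜ ({c} : Set ℝ) (measurableSet_singleton c).compl
          (measurableSet_singleton c))
      simp only [ContinuousLinearMap.comp_apply, Set.compl_inter_self, hE.empty] at h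
      simpa using h
    have hcompl : μmeas x ({c} : Set ℝ)ᶜ = 0 := by
      rw [hmu _ (measurableSet_singleton c).compl x, hEc0]
      simp
    have haec : ∀ᵐ t ∂(μmeas x), t = c := by
      rw [MeasureTheory.ae_iff]
      exact hcompl
    have hI : ∫ t, t ^ 2 ∂(μmeas x) = c ^ 2 * ‖x‖ ^ 2 := by
      have h1 : ∫ t, t ^ 2 ∂(μmeas x) = ∫ _, c ^ 2 ∂(μmeas x) := by
        apply integral_congr_ae
        filter_upwards [haec] with t ht
        rw [ht]
      rw [h1, integral_const, smul_eq_mul, measureReal_def, hMuniv x]; ring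
    have h2 : ‖T x‖ ^ 2 = (c * ‖x‖) ^ 2 := by
      rw [← hTsq x, hI]; ring
    exact (sq_eq_sq₀ (norm_nonneg _) (by positivity)).mp h2
end
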